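/- arXiv:1608.08377 — 2 statements merged into one kernel-verified Lean document; each statement's English description precedes it below -/
import Mathlib

section
/- Let (M_n, S_n)_{n≥0} be a null-homologous MRW with X_n = g(M_n) − g(M_{n−1}) P_π-a.s. Then exactly one of the following five alternatives holds: (NH-1) g ≡ 0 and S_n = 0 a.s. for all n ≥ 1; (NH-2) 0 ≠ sup_{i∈S}|g(i)| < ∞ and −∞ < liminf S_n ≤ limsup S_n < ∞ P_π-a.s.; (NH-3) −∞ = inf_i g(i) < sup_i g(i) < ∞, liminf S_n = −∞ and limsup S_n ∈ ℝ P_π-a.s.; (NH-4) −∞ < inf_i g(i) < sup_i g(i) = ∞, liminf S_n ∈ ℝ and limsup S_n = ∞ P_π-a.s.; (NH-5) inf_i g(i) = −∞, sup_i g(i) = ∞, liminf S_n = −∞ and limsup S_n = ∞ P_π-a.s. Moreover, whenever for † ∈ {>,<} all the ladder epochs σ_n^† are a.s. finite, the associated ladder chain (M_n^†)_{n≥0} is transient, i.e. P_i(M_n^† = i infinitely often) < 1 for all i ∈ S. -/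
open MeasureTheory Filter Set ENNReal
open scoped Classical

noncomputable section

/-- A real sequence oscillates: its `limsup` (computed in `EReal`) is `+∞` and its
`liminf` is `-∞`. -/
def OscSeq (u : ℕ → ℝ) : Prop :=
  Filter.limsup (fun n => (u n : EReal)) Filter.atTop = ⊤ ∧
    Filter.liminf (fun n => (u n : EReal)) Filter.atTop = ⊥

/-- A **Markov random walk** `(M_n, S_n)_{n ≥ 0}` with countable, irreducible, positive
recurrent driving chain `M` on the state space `𝕊`, with transition probabilities `p`,
stationary distribution `π`, and conditionally independent increments `X` whose conditional
law given the driving chain is governed by the stochastic kernel `K` from `𝕊²` to `ℝ`.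
`P i` is the law of the whole walk given `M 0 = i`.  The field `pathLaw` prescribes all
finite-dimensional distributions; `recurrent` says that from any starting state every state
is visited infinitely often a.s. (irreducibility and recurrence), and `posRec` says that the
first return time to any state has finite mean (positive recurrence). -/
structure MRW (𝕊 : Type*) (Ω : Type*) [Countable 𝕊] [MeasurableSpace 𝕊]
    [MeasurableSingletonClass 𝕊] [MeasurableSpace Ω] where
  P : 𝕊 → Measure Ω
  isProb : ∀ i, IsProbabilityMeasure (P i)
  M : ℕ → Ω → 𝕊
  X : ℕ → Ω → ℝ
  measM : ∀ n, Measurable (M n)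
  measX : ∀ n, Measurable (X n)
  p : 𝕊 → 𝕊 → ℝ≥0∞
  π : 𝕊 → ℝ≥0∞
  K : 𝕊 → 𝕊 → Measure ℝ
  Kprob : ∀ i j, IsProbabilityMeasure (K i j)
  pathLaw : ∀ (i : 𝕊) (n : ℕ) (path : ℕ → 𝕊) (B : ℕ → Set ℝ),
    (∀ k, MeasurableSet (B k)) →
    P i {ω | (∀ k ≤ n, M k ω = path k) ∧ ∀ k, 1 ≤ k → k ≤ n → X k ω ∈ B k} =
      (if path 0 = i then 1 else 0) *
        ∏ k ∈ Finset.range n, (p (path k) (path (k + 1)) * K (path k) (path (k + 1)) (B (k + 1)))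
  recurrent : ∀ i j, P i {ω | ∀ N, ∃ n ≥ N, M n ω = j} = 1
  πpos : ∀ i, 0 < π i
  πsum : ∑' i, π i = 1
  πstat : ∀ j, ∑' i, π i * p i j = π j
  posRec : ∀ i, ∫⁻ ω, (↑(sInf {n : ℕ | 1 ≤ n ∧ M n ω = i}) : ℝ≥0∞) ∂P i < ⊤

namespace MRW

variable {𝕊 : Type*} {Ω : Type*} [Countable 𝕊] [MeasurableSpace 𝕊]
  [MeasurableSingletonClass 𝕊] [MeasurableSpace Ω] (W : MRW 𝕊 Ω)

/-- The additive part: `S n = X 1 + ⋯ + X n`, `S 0 = 0`. -/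
def S (n : ℕ) (ω : Ω) : ℝ := ∑ k ∈ Finset.range n, W.X (k + 1) ω

/-- The successive return times `τ n i` of the driving chain to the state `i`
(`τ 0 i = 0`); a.s. well defined by positive recurrence. -/
def τ (i : 𝕊) : ℕ → Ω → ℕ
  | 0, _ => 0
  | n + 1, ω => sInf {k : ℕ | τ i n ω < k ∧ W.M k ω = i}

/-- The stationary law `P_π = ∑ i, π i • P i` of the walk. -/
def Pπ : Measure Ω := Measure.sum fun i => W.π i • W.P i

/-- The MRW is *null-homologous* if `X n = g (M n) - g (M (n-1))` `P_π`-a.s. for some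
function `g` on the state space. -/
def NullHomologous : Prop :=
  ∃ g : 𝕊 → ℝ, ∀ n : ℕ, 1 ≤ n → ∀ᵐ ω ∂W.Pπ, W.X n ω = g (W.M n ω) - g (W.M (n - 1) ω)

/-- The MRW is *nontrivial* if it is not null-homologous. -/
def IsNontrivial : Prop := ¬W.NullHomologous

/-- Positive divergence: `S n → ∞` a.s. (under every `P i`). -/
def PosDiv : Prop := ∀ i, ∀ᵐ ω ∂W.P i, Tendsto (fun n => W.S n ω) atTop atTop

/-- Negative divergence: `S n → -∞` a.s. (under every `P i`). -/
def NegDiv : Prop := ∀ i, ∀ᵐ ω ∂W.P i, Tendsto (fun n => W.S n ω) atTop atBot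

/-- Oscillation: `limsup S n = ∞` and `liminf S n = -∞` a.s. (under every `P i`). -/
def OscDiv : Prop := ∀ i, ∀ᵐ ω ∂W.P i, OscSeq fun n => W.S n ω

/-- `S_{τ(i)}`, the first-cycle increment of the random walk embedded at `i`. -/
def Sτ (i : 𝕊) (ω : Ω) : ℝ := W.S (W.τ i 1 ω) ω

/-- `S_{τ(i)}⁺`. -/
def Sτpos (i : 𝕊) (ω : Ω) : ℝ := max (W.Sτ i ω) 0

/-- `S_{τ(i)}⁻`. -/
def Sτneg (i : 𝕊) (ω : Ω) : ℝ := max (-W.Sτ i ω) 0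

/-- `A_i(x) = E_i (S_{τ(i)}⁺ ∧ x) - E_i (S_{τ(i)}⁻ ∧ x)`. -/
def A (i : 𝕊) (x : ℝ) : ℝ :=
  ∫ ω, min (W.Sτpos i ω) x ∂W.P i - ∫ ω, min (W.Sτneg i ω) x ∂W.P i

/-- `A_i(x) > 0` for all sufficiently large `x`. -/
def AUltPos (i : 𝕊) : Prop := ∃ x₀ : ℝ, ∀ x ≥ x₀, 0 < W.A i x

/-- The function `J_i`:  `J_i 0 = 1` and, for `x > 0`,
`J_i x = x / E_i (S_{τ(i)}⁺ ∧ x)` if `P i (S_{τ(i)} > 0) > 0`, and `J_i x = x` otherwise. -/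
def J (i : 𝕊) (x : ℝ) : ℝ :=
  if x = 0 then 1
  else if 0 < W.P i {ω | 0 < W.Sτ i ω} then x / ∫ ω, min (W.Sτpos i ω) x ∂W.P i
  else x

/-- The function `J_i` for the reflected walk `(M_n, -S_n)`:  it has
`E_i (S_{τ(i)}⁻ ∧ x)` in the denominator. -/
def Jrefl (i : 𝕊) (x : ℝ) : ℝ :=
  if x = 0 then 1
  else if 0 < W.P i {ω | W.Sτ i ω < 0} then x / ∫ ω, min (W.Sτneg i ω) x ∂W.P i
  else x

/-- `D^i = max_{0 < k ≤ τ(i)} S_k⁻`, the maximal downward excursion during the first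
`i`-cycle (its `P i`-distribution is that of the generic copy `D^i`).  Including the index
`k = 0` is harmless since `S_0⁻ = 0`. -/
def D (i : 𝕊) (ω : Ω) : ℝ :=
  (Finset.range (W.τ i 1 ω + 1)).sup' Finset.nonempty_range_add_one fun k => max (-W.S k ω) 0

/-- The tail `V_i^α((x,∞)) = E_i (∑_{n=1}^{τ(i)} 1_{S_n⁻ > x})^α` of the excursion
measure `V_i^α`. -/
def Vtail (i : 𝕊) (α : ℝ) (x : ℝ) : ℝ≥0∞ :=
  ∫⁻ ω,
    ((((Finset.Icc 1 (W.τ i 1 ω)).filter fun n => x < max (-W.S n ω) 0).card : ℝ≥0∞) ^ α)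
    ∂W.P i

/-- `V` is (a version of) the excursion measure `V_i^α`: it is carried by `(0,∞)` and has
the prescribed tails `V((x,∞)) = E_i (∑_{n=1}^{τ(i)} 1_{S_n⁻ > x})^α` for `x ≥ 0`. -/
def IsV (i : 𝕊) (α : ℝ) (V : Measure ℝ) : Prop :=
  V (Set.Iic 0) = 0 ∧ ∀ x : ℝ, 0 ≤ x → V (Set.Ioi x) = W.Vtail i α x

/-- `∫ f dV_i^α < ∞`. -/
def VInt (i : 𝕊) (α : ℝ) (f : ℝ → ℝ≥0∞) : Prop :=
  ∃ V : Measure ℝ, W.IsV i α V ∧ ∫⁻ x, f x ∂V < ⊤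

/-- First time `n ≥ 1` at which `A n` holds (`⊤` if there is none). -/
def firstTime (A : ℕ → Ω → Prop) (ω : Ω) : ℕ∞ :=
  sInf {e : ℕ∞ | ∃ n : ℕ, e = n ∧ 1 ≤ n ∧ A n ω}

/-- The level `x` first passage time `σ^>(x) = inf {n ≥ 1 : S n > x}`. -/
def σGt (x : ℝ) (ω : Ω) : ℕ∞ := firstTime (fun n ω => x < W.S n ω) ω

/-- The first passage time `σ^≤(x) = inf {n ≥ 1 : S n ≤ x}` (apply with `x = -x₀`). -/
def σLe (x : ℝ) (ω : Ω) : ℕ∞ := firstTime (fun n ω => W.S n ω ≤ x) ω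

/-- The post-`τ(M 0)`-passage time `σ̄^>(x) = inf {n > τ(M 0) : S n > x}`. -/
def σBarGt (x : ℝ) (ω : Ω) : ℕ∞ :=
  sInf {e : ℕ∞ | ∃ n : ℕ, e = n ∧ W.τ (W.M 0 ω) 1 ω < n ∧ x < W.S n ω}

/-- The level `x` last exit time `ρ(x) = sup {n ≥ 0 : S n ≤ x}`. -/
def lastExit (x : ℝ) (ω : Ω) : ℕ∞ := sSup {e : ℕ∞ | ∃ n : ℕ, e = n ∧ W.S n ω ≤ x}

/-- The epoch `σ_min = inf {n ≥ 1 : S n = inf_{k ≥ 1} S k}` at which the minimum is hit. -/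
def σmin (ω : Ω) : ℕ∞ := firstTime (fun n ω => W.S n ω = ⨅ k : ℕ, W.S (k + 1) ω) ω

/-- `ν(i,x) = inf {n ≥ 1 : S_{τ_n(i)} > x}`. -/
def ν (i : 𝕊) (x : ℝ) (ω : Ω) : ℕ∞ :=
  sInf {e : ℕ∞ | ∃ n : ℕ, e = n ∧ 1 ≤ n ∧ x < W.S (W.τ i n ω) ω}

/-- The renewal counting variable `N(x) = ∑_{n ≥ 1} 1_{S n ≤ x}` (with value in `ℝ≥0∞`). -/
def Ncount (x : ℝ) (ω : Ω) : ℝ≥0∞ := ∑' n : ℕ, if W.S (n + 1) ω ≤ x then 1 else 0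

/-- The MRW is of *type `α`* if `E_i τ(i)^{1+α} < ∞` (for all, equivalently some, `i`). -/
def TypeAlpha (α : ℝ) : Prop := ∀ i, ∫⁻ ω, (W.τ i 1 ω : ℝ≥0∞) ^ (1 + α) ∂W.P i < ⊤

/-- The random walk embedded at `i` is positive divergent. -/
def EmbPD (i : 𝕊) : Prop :=
  ∀ᵐ ω ∂W.P i, Tendsto (fun n => W.S (W.τ i n ω) ω) atTop atTop

/-- The random walk embedded at `i` is negative divergent. -/
def EmbND (i : 𝕊) : Prop :=
  ∀ᵐ ω ∂W.P i, Tendsto (fun n => W.S (W.τ i n ω) ω) atTop atBot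

/-- The random walk embedded at `i` oscillates. -/
def EmbOsc (i : 𝕊) : Prop :=
  ∀ᵐ ω ∂W.P i, OscSeq fun n => W.S (W.τ i n ω) ω

/-- `S_n^⊕ = ∑_{k=1}^n X_k⁺`. -/
def Splus (n : ℕ) (ω : Ω) : ℝ := ∑ k ∈ Finset.range n, max (W.X (k + 1) ω) 0

/-- `S_n^⊖ = ∑_{k=1}^n X_k⁻`. -/
def Sminus (n : ℕ) (ω : Ω) : ℝ := ∑ k ∈ Finset.range n, max (-W.X (k + 1) ω) 0

/-- The strictly ascending ladder epochs `σ_n^>` (`ladderGt 0 = 0`, value `⊤` if there is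
no further ladder epoch, in which case all later ones equal `⊤` as well). -/
def ladderGt : ℕ → Ω → ℕ∞
  | 0, _ => 0
  | n + 1, ω => sInf {e : ℕ∞ | ∃ k : ℕ, e = k ∧ ladderGt n ω < (k : ℕ∞) ∧
      W.S ((ladderGt n ω).toNat) ω < W.S k ω}

/-- The strictly descending ladder epochs `σ_n^<`. -/
def ladderLt : ℕ → Ω → ℕ∞
  | 0, _ => 0
  | n + 1, ω => sInf {e : ℕ∞ | ∃ k : ℕ, e = k ∧ ladderLt n ω < (k : ℕ∞) ∧
      W.S k ω < W.S ((ladderLt n ω).toNat) ω}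

/-- The supremum `σ_*` of the finite ladder epochs of the ladder-epoch sequence `lad`. -/
def ladderFinSup (lad : ℕ → Ω → ℕ∞) (ω : Ω) : ℕ∞ :=
  sSup {e : ℕ∞ | (∃ n, 1 ≤ n ∧ lad n ω = e) ∧ e ≠ ⊤}

/-- The ladder chain associated with the ladder-epoch sequence `lad`:
`M_n^† = M_{σ_n^†}` on `{σ_n^† < ∞}` and `M_n^† = M_{σ_*^†}` on `{σ_n^† = ∞}`. -/
def Mladder (lad : ℕ → Ω → ℕ∞) (n : ℕ) (ω : Ω) : 𝕊 :=
  if lad n ω = ⊤ then W.M ((ladderFinSup lad ω).toNat) ω else W.M ((lad n ω).toNat) ω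

/-- The strictly ascending ladder chain `(M_n^>)`. -/
def Mgt (n : ℕ) (ω : Ω) : 𝕊 := W.Mladder (W.ladderGt) n ω

/-- The strictly descending ladder chain `(M_n^<)`. -/
def Mlt (n : ℕ) (ω : Ω) : 𝕊 := W.Mladder (W.ladderLt) n ω

/-- The function `J_π`: `J_π 0 = 1` and, for `x > 0`,
`J_π x = x / E_π ((X 1 ∧ x)⁺)` if `P_π (X 1 > 0) > 0`, and `J_π x = x` otherwise. -/
def Jπ (x : ℝ) : ℝ :=
  if x = 0 then 1
  else if 0 < W.Pπ {ω | 0 < W.X 1 ω} then x / ∫ ω, max (min (W.X 1 ω) x) 0 ∂W.Pπ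
  else x

/-- `A_π(x) > 0` for all sufficiently large `x`, where
`A_π(x) = E_π ((X 1 ∧ x)⁺) - E_π ((X 1 ∧ x)⁻)` (stated by comparison of the two
`ℝ≥0∞`-valued integrals, since the second one may be infinite). -/
def AπUltPos : Prop :=
  ∃ x₀ : ℝ, ∀ x ≥ x₀,
    ∫⁻ ω, ENNReal.ofReal (max (-min (W.X 1 ω) x) 0) ∂W.Pπ <
      ∫⁻ ω, ENNReal.ofReal (max (min (W.X 1 ω) x) 0) ∂W.Pπ

/-- `W'` is the dual MRW of `W`: same stationary distribution, time-reversed transition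
probabilities `π_i p'_{ij} = π_j p_{ji}`, and reversed increment kernel `K'_{ij} = K_{ji}`. -/
def IsDual {Ω' : Type*} [MeasurableSpace Ω'] (W' : MRW 𝕊 Ω') : Prop :=
  (∀ i, W'.π i = W.π i) ∧ (∀ i j, W.π i * W'.p i j = W.π j * W.p j i) ∧
    (∀ i j, W'.K i j = W.K j i)

/-- The weighted occupation series `∑_{n ≥ 1} n^{α-1} P_i (S n ≤ x)`. -/
def spitzerSeries (α : ℝ) (i : 𝕊) (x : ℝ) : ℝ≥0∞ :=
  ∑' n : ℕ, ((n : ℝ≥0∞) + 1) ^ (α - 1) * W.P i {ω | W.S (n + 1) ω ≤ x}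

/-- `E_i σ^>(x)^β` (infinite if `σ^>(x) = ∞` with positive probability). -/
def EσGt (i : 𝕊) (x : ℝ) (β : ℝ) : ℝ≥0∞ := ∫⁻ ω, (W.σGt x ω : ℝ≥0∞) ^ β ∂W.P i

/-- `E_i σ̄^>(x)^β`. -/
def EσBar (i : 𝕊) (x : ℝ) (β : ℝ) : ℝ≥0∞ := ∫⁻ ω, (W.σBarGt x ω : ℝ≥0∞) ^ β ∂W.P i

/-- `E_i ρ(x)^β`. -/
def Eρ (i : 𝕊) (x : ℝ) (β : ℝ) : ℝ≥0∞ := ∫⁻ ω, (W.lastExit x ω : ℝ≥0∞) ^ β ∂W.P i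

/-- `E_i σ_min^β`. -/
def Eσmin (i : 𝕊) (β : ℝ) : ℝ≥0∞ := ∫⁻ ω, (W.σmin ω : ℝ≥0∞) ^ β ∂W.P i

/-- `E_i [σ^≤(x)^β ; σ^≤(x) < ∞]`. -/
def EσLeFin (i : 𝕊) (x : ℝ) (β : ℝ) : ℝ≥0∞ :=
  ∫⁻ ω, (if W.σLe x ω = ⊤ then 0 else ((W.σLe x ω).toNat : ℝ≥0∞) ^ β) ∂W.P i

/-- `E_i [|S_{σ^≤(x)}|^β ; σ^≤(x) < ∞]`. -/
def ESσLe (i : 𝕊) (x : ℝ) (β : ℝ) : ℝ≥0∞ :=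
  ∫⁻ ω, (if W.σLe x ω = ⊤ then 0
    else ENNReal.ofReal |W.S ((W.σLe x ω).toNat) ω| ^ β) ∂W.P i

/-- `E_i N(x)^β`. -/
def EN (i : 𝕊) (x : ℝ) (β : ℝ) : ℝ≥0∞ := ∫⁻ ω, W.Ncount x ω ^ β ∂W.P i

/-- `E_i [τ_{ν(i,x)}(i)^β]` (infinite when `ν(i,x) = ∞`). -/
def Eτν (i : 𝕊) (x : ℝ) (β : ℝ) : ℝ≥0∞ :=
  ∫⁻ ω, (if W.ν i x ω = ⊤ then (⊤ : ℝ≥0∞)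
    else (W.τ i ((W.ν i x ω).toNat) ω : ℝ≥0∞) ^ β) ∂W.P i

/-- `E_i J_i(D^i)^β`. -/
def EJD (i : 𝕊) (β : ℝ) : ℝ≥0∞ :=
  ∫⁻ ω, ENNReal.ofReal (W.J i (W.D i ω)) ^ β ∂W.P i

/-- `E_i J_i(S_{τ(i)}⁻)^β`. -/
def EJSτneg (i : 𝕊) (β : ℝ) : ℝ≥0∞ :=
  ∫⁻ ω, ENNReal.ofReal (W.J i (W.Sτneg i ω)) ^ β ∂W.P i

/-- `E_i (D^i)^β J_i(D^i)`. -/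
def EDJD (i : 𝕊) (β : ℝ) : ℝ≥0∞ :=
  ∫⁻ ω, ENNReal.ofReal (W.D i ω) ^ β * ENNReal.ofReal (W.J i (W.D i ω)) ∂W.P i

/-- `E_i (S_{τ(i)}⁻)^β J_i(S_{τ(i)}⁻)`. -/
def ESτnegJ (i : 𝕊) (β : ℝ) : ℝ≥0∞ :=
  ∫⁻ ω, ENNReal.ofReal (W.Sτneg i ω) ^ β * ENNReal.ofReal (W.J i (W.Sτneg i ω)) ∂W.P i

/-- `E_i Ĵ_i(S_{τ(i)}⁺)^β` for the reflected walk. -/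
def EJreflSτpos (i : 𝕊) (β : ℝ) : ℝ≥0∞ :=
  ∫⁻ ω, ENNReal.ofReal (W.Jrefl i (W.Sτpos i ω)) ^ β ∂W.P i

/-- `E_i (S_{τ(i)}⁺)^β Ĵ_i(S_{τ(i)}⁺)` for the reflected walk. -/
def ESτposJrefl (i : 𝕊) (β : ℝ) : ℝ≥0∞ :=
  ∫⁻ ω, ENNReal.ofReal (W.Sτpos i ω) ^ β * ENNReal.ofReal (W.Jrefl i (W.Sτpos i ω)) ∂W.P i

/-- `E_i |min_{n ≥ 0} S n|^β`. -/
def EminS (i : 𝕊) (β : ℝ) : ℝ≥0∞ :=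
  ∫⁻ ω, ENNReal.ofReal |⨅ n : ℕ, W.S n ω| ^ β ∂W.P i

/-- `E_π J_π(X_1⁻)^β`. -/
def EJπ (β : ℝ) : ℝ≥0∞ :=
  ∫⁻ ω, ENNReal.ofReal (W.Jπ (max (-W.X 1 ω) 0)) ^ β ∂W.Pπ

/-- `E_π (X_1⁻)^β J_π(X_1⁻)`. -/
def EXnegJπ (β : ℝ) : ℝ≥0∞ :=
  ∫⁻ ω, ENNReal.ofReal (max (-W.X 1 ω) 0) ^ β *
    ENNReal.ofReal (W.Jπ (max (-W.X 1 ω) 0)) ∂W.Pπ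

end MRW

variable {𝕊 : Type*} {Ω : Type*} [Countable 𝕊] [MeasurableSpace 𝕊]
  [MeasurableSingletonClass 𝕊] [MeasurableSpace Ω]


section NHAux

private lemma nh_ereal_eq_top {x : EReal} (h : ∀ r : ℝ, (r : EReal) ≤ x) : x = ⊤ := by
  by_contra hx
  obtain ⟨r, hr1, _⟩ := EReal.lt_iff_exists_real_btwn.1 (lt_top_iff_ne_top.2 hx)
  exact absurd (h r) (not_le.2 hr1)

private lemma nh_ereal_eq_bot {x : EReal} (h : ∀ r : ℝ, x ≤ (r : EReal)) : x = ⊥ := by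
  by_contra hx
  obtain ⟨r, _, hr2⟩ := EReal.lt_iff_exists_real_btwn.1 (bot_lt_iff_ne_bot.2 hx)
  exact absurd (h r) (not_le.2 hr2)

private lemma nh_sInf_mem {A : Set ℕ∞} (h : sInf A ≠ ⊤) : sInf A ∈ A := by
  have hne : A.Nonempty := by
    by_contra hA
    rw [Set.not_nonempty_iff_eq_empty] at hA
    simp [hA] at h
  obtain ⟨m, hm, hmin⟩ := wellFounded_lt.has_min A hne
  exact le_antisymm (sInf_le hm) (le_sInf fun b hb => not_lt.1 (hmin b hb)) ▸ hm

private lemma nh_limsup_le' {u : ℕ → ℝ} {c : ℝ} (h : ∀ n, u n ≤ c) :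
    Filter.limsup (fun n => (u n : EReal)) atTop ≤ (c : EReal) :=
  Filter.limsup_le_of_le (h := Filter.Eventually.of_forall fun n => EReal.coe_le_coe_iff.2 (h n))

private lemma nh_le_limsup' {u : ℕ → ℝ} {c : ℝ} (h : ∃ᶠ n in atTop, c ≤ u n) :
    (c : EReal) ≤ Filter.limsup (fun n => (u n : EReal)) atTop :=
  Filter.le_limsup_of_frequently_le (h.mono fun n hn => EReal.coe_le_coe_iff.2 hn)

private lemma nh_liminf_le' {u : ℕ → ℝ} {c : ℝ} (h : ∃ᶠ n in atTop, u n ≤ c) :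
    Filter.liminf (fun n => (u n : EReal)) atTop ≤ (c : EReal) :=
  Filter.liminf_le_of_frequently_le (h.mono fun n hn => EReal.coe_le_coe_iff.2 hn)

private lemma nh_le_liminf' {u : ℕ → ℝ} {c : ℝ} (h : ∀ n, c ≤ u n) :
    (c : EReal) ≤ Filter.liminf (fun n => (u n : EReal)) atTop :=
  Filter.le_liminf_of_le (h := Filter.Eventually.of_forall fun n => EReal.coe_le_coe_iff.2 (h n))

variable {𝕊 : Type*} {Ω : Type*} [Countable 𝕊] [MeasurableSpace 𝕊]
  [MeasurableSingletonClass 𝕊] [MeasurableSpace Ω]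

private lemma nh_transfer (W : MRW 𝕊 Ω) {p : Ω → Prop}
    (hp : ∀ᵐ ω ∂W.Pπ, p ω) (i : 𝕊) : ∀ᵐ ω ∂W.P i, p ω := by
  rw [MRW.Pπ] at hp
  rw [ae_iff] at hp ⊢
  have hle : (W.π i • W.P i) {a | ¬ p a} ≤
      (Measure.sum fun j => W.π j • W.P j) {a | ¬ p a} :=
    Measure.le_iff'.1 (Measure.le_sum _ i) _
  rw [hp] at hle
  simp only [Measure.smul_apply, smul_eq_mul, nonpos_iff_eq_zero] at hle
  exact (mul_eq_zero.1 hle).resolve_left (W.πpos i).ne'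

private lemma nh_transfer' (W : MRW 𝕊 Ω) {p : Ω → Prop}
    (hp : ∀ i, ∀ᵐ ω ∂W.P i, p ω) : ∀ᵐ ω ∂W.Pπ, p ω := by
  rw [MRW.Pπ, ae_iff]
  choose N hsub hmeas hnull using fun i => exists_measurable_superset_of_null (ae_iff.1 (hp i))
  have hN : MeasurableSet (⋂ i, N i) := MeasurableSet.iInter hmeas
  have h0 : (Measure.sum fun i => W.π i • W.P i) (⋂ i, N i) = 0 := by
    rw [Measure.sum_apply _ hN]
    refine ENNReal.tsum_eq_zero.2 fun i => ?_
    have : W.P i (⋂ j, N j) = 0 := measure_mono_null (Set.iInter_subset _ i) (hnull i)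
    simp [this]
  exact measure_mono_null (Set.subset_iInter hsub) h0

private lemma nh_hSg (W : MRW 𝕊 Ω) (g : 𝕊 → ℝ)
    (hg : ∀ n : ℕ, 1 ≤ n → ∀ᵐ ω ∂W.Pπ, W.X n ω = g (W.M n ω) - g (W.M (n - 1) ω)) (i : 𝕊) :
    ∀ᵐ ω ∂W.P i, ∀ n, W.S n ω = g (W.M n ω) - g (W.M 0 ω) := by
  have h1 : ∀ᵐ ω ∂W.P i, ∀ n : ℕ, 1 ≤ n → W.X n ω = g (W.M n ω) - g (W.M (n - 1) ω) := by
    rw [ae_all_iff]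
    intro n
    by_cases hn : 1 ≤ n
    · exact (nh_transfer W (hg n hn) i).mono fun ω h _ => h
    · exact Filter.Eventually.of_forall fun ω h => absurd h hn
  refine h1.mono fun ω h n => ?_
  have hX : ∀ k ∈ Finset.range n, W.X (k + 1) ω = g (W.M (k + 1) ω) - g (W.M k ω) := by
    intro k _
    simpa using h (k + 1) (Nat.le_add_left 1 k)
  rw [MRW.S, Finset.sum_congr rfl hX, Finset.sum_range_sub (fun k => g (W.M k ω))]

private lemma nh_rec (W : MRW 𝕊 Ω) (i : 𝕊) :
    ∀ᵐ ω ∂W.P i, ∀ j, ∃ᶠ n in atTop, W.M n ω = j := by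
  rw [ae_all_iff]
  intro j
  haveI := W.isProb i
  have hmeas : MeasurableSet {ω | ∀ N, ∃ n ≥ N, W.M n ω = j} := by
    have he : {ω | ∀ N, ∃ n ≥ N, W.M n ω = j} =
        ⋂ N, ⋃ n, ⋃ _ : n ≥ N, (W.M n) ⁻¹' {j} := by
      ext ω; simp
    rw [he]
    exact MeasurableSet.iInter fun N => MeasurableSet.iUnion fun n =>
      MeasurableSet.iUnion fun _ => (W.measM n) (measurableSet_singleton j)
  have hc : W.P i {ω | ∀ N, ∃ n ≥ N, W.M n ω = j}ᶜ = 0 := by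
    rw [measure_compl hmeas (measure_ne_top _ _), W.recurrent i j, measure_univ, tsub_self]
  rw [ae_iff]
  have hset : {ω | ¬ ∃ᶠ n in atTop, W.M n ω = j} = {ω | ∀ N, ∃ n ≥ N, W.M n ω = j}ᶜ := by
    ext ω
    simp only [Set.mem_setOf_eq, Set.mem_compl_iff, Filter.frequently_atTop]
  rw [hset]
  exact hc

private lemma nh_ladder (W : MRW 𝕊 Ω) (g : 𝕊 → ℝ)
    (hSg : ∀ i, ∀ᵐ ω ∂W.P i, ∀ n, W.S n ω = g (W.M n ω) - g (W.M 0 ω))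
    (lad : ℕ → Ω → ℕ∞) (rel : ℝ → ℝ → Prop)
    (htrans : ∀ {a b c}, rel a b → rel b c → rel a c) (hirr : ∀ a, ¬ rel a a)
    (hstep : ∀ n ω, lad (n + 1) ω = sInf {e : ℕ∞ | ∃ k : ℕ, e = (k : ℕ∞) ∧
      lad n ω < (k : ℕ∞) ∧ rel (W.S ((lad n ω).toNat) ω) (W.S k ω)})
    (hzero : ∀ ω, lad 0 ω = 0)
    (hfin : ∀ i, ∀ n : ℕ, 1 ≤ n → ∀ᵐ ω ∂W.P i, lad n ω ≠ ⊤) (i : 𝕊) :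
    W.P i {ω | ∀ N, ∃ n ≥ N, W.Mladder lad n ω = i} < 1 := by
  haveI := W.isProb i
  have hfinall : ∀ᵐ ω ∂W.P i, ∀ n : ℕ, 1 ≤ n → lad n ω ≠ ⊤ := by
    rw [ae_all_iff]
    intro n
    by_cases hn : 1 ≤ n
    · exact (hfin i n hn).mono fun ω h _ => h
    · exact Filter.Eventually.of_forall fun ω h => absurd h hn
  have key : ∀ᵐ ω ∂W.P i, ¬ (∀ N, ∃ n ≥ N, W.Mladder lad n ω = i) := by
    filter_upwards [hSg i, hfinall] with ω hs hf
    intro hR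
    have hfin' : ∀ n, lad n ω ≠ ⊤ := by
      intro n
      cases n with
      | zero => rw [hzero ω]; exact (by simp : (0 : ℕ∞) ≠ ⊤)
      | succ n => exact hf (n + 1) (Nat.succ_le_succ (Nat.zero_le n))
    have hstep' : ∀ n, rel (W.S ((lad n ω).toNat) ω) (W.S ((lad (n + 1) ω).toNat) ω) := by
      intro n
      have h1 : lad (n + 1) ω ∈ {e : ℕ∞ | ∃ k : ℕ, e = (k : ℕ∞) ∧
          lad n ω < (k : ℕ∞) ∧ rel (W.S ((lad n ω).toNat) ω) (W.S k ω)} := by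
        rw [hstep n ω]
        exact nh_sInf_mem (by rw [← hstep n ω]; exact hfin' (n + 1))
      obtain ⟨k, hk, -, hrel⟩ := h1
      rw [hk]
      simpa using hrel
    have hchain : ∀ n m, m < n →
        rel (W.S ((lad m ω).toNat) ω) (W.S ((lad n ω).toNat) ω) := by
      intro n
      induction n with
      | zero => exact fun m hm => absurd hm (Nat.not_lt_zero m)
      | succ n ih =>
        intro m hm
        rcases Nat.lt_succ_iff_lt_or_eq.1 hm with h | h
        · exact htrans (ih m h) (hstep' n)
        · rw [h]; exact hstep' n
    obtain ⟨n1, -, hi1⟩ := hR 0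
    obtain ⟨n2, hn2, hi2⟩ := hR (n1 + 1)
    have e1 : W.M ((lad n1 ω).toNat) ω = i := by
      simp only [MRW.Mladder] at hi1
      rwa [if_neg (hfin' n1)] at hi1
    have e2 : W.M ((lad n2 ω).toNat) ω = i := by
      simp only [MRW.Mladder] at hi2
      rwa [if_neg (hfin' n2)] at hi2
    have hv : W.S ((lad n1 ω).toNat) ω = W.S ((lad n2 ω).toNat) ω := by
      rw [hs ((lad n1 ω).toNat), hs ((lad n2 ω).toNat), e1, e2]
    have hc := hchain n2 n1 (by omega)
    rw [hv] at hc
    exact hirr _ hc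
  have hzero' : W.P i {ω | ∀ N, ∃ n ≥ N, W.Mladder lad n ω = i} = 0 := by
    have h := ae_iff.1 key
    simpa [not_not] using h
  rw [hzero']
  exact zero_lt_one

variable {W : MRW 𝕊 Ω} {g : 𝕊 → ℝ} {ω : Ω}

private lemma nh_limsup_ne_top (hs : ∀ n, W.S n ω = g (W.M n ω) - g (W.M 0 ω))
    {C : ℝ} (hub : ∀ j, g j ≤ C) :
    Filter.limsup (fun n => (W.S n ω : EReal)) Filter.atTop ≠ ⊤ := by
  have h := nh_limsup_le' (u := fun n => W.S n ω) (c := C - g (W.M 0 ω))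
    (fun n => by show W.S n ω ≤ _; rw [hs n]; linarith [hub (W.M n ω)])
  exact (h.trans_lt (EReal.coe_lt_top _)).ne

private lemma nh_liminf_ne_bot (hs : ∀ n, W.S n ω = g (W.M n ω) - g (W.M 0 ω))
    {c : ℝ} (hlb : ∀ j, c ≤ g j) :
    Filter.liminf (fun n => (W.S n ω : EReal)) Filter.atTop ≠ ⊥ := by
  have h := nh_le_liminf' (u := fun n => W.S n ω) (c := c - g (W.M 0 ω))
    (fun n => by show _ ≤ W.S n ω; rw [hs n]; linarith [hlb (W.M n ω)])
  exact ((EReal.bot_lt_coe _).trans_le h).ne'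

private lemma nh_limsup_ne_bot (hs : ∀ n, W.S n ω = g (W.M n ω) - g (W.M 0 ω))
    (hr : ∃ᶠ n in atTop, W.M n ω = W.M 0 ω) :
    Filter.limsup (fun n => (W.S n ω : EReal)) Filter.atTop ≠ ⊥ := by
  have h := nh_le_limsup' (u := fun n => W.S n ω) (c := (0 : ℝ))
    (hr.mono fun n hn => (by rw [hs n, hn]; simp : (0:ℝ) ≤ W.S n ω))
  exact ((EReal.bot_lt_coe 0).trans_le h).ne'

private lemma nh_liminf_ne_top (hs : ∀ n, W.S n ω = g (W.M n ω) - g (W.M 0 ω))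
    (hr : ∃ᶠ n in atTop, W.M n ω = W.M 0 ω) :
    Filter.liminf (fun n => (W.S n ω : EReal)) Filter.atTop ≠ ⊤ := by
  have h := nh_liminf_le' (u := fun n => W.S n ω) (c := (0 : ℝ))
    (hr.mono fun n hn => (by rw [hs n, hn]; simp : W.S n ω ≤ (0:ℝ)))
  exact (h.trans_lt (EReal.coe_lt_top 0)).ne

private lemma nh_limsup_eq_top (hs : ∀ n, W.S n ω = g (W.M n ω) - g (W.M 0 ω))
    (hr : ∀ j, ∃ᶠ n in atTop, W.M n ω = j) (hA : ¬ BddAbove (Set.range g)) :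
    Filter.limsup (fun n => (W.S n ω : EReal)) Filter.atTop = ⊤ := by
  apply nh_ereal_eq_top
  intro r
  obtain ⟨y, hym, hy⟩ := not_bddAbove_iff.1 hA (r + g (W.M 0 ω))
  obtain ⟨j, rfl⟩ := hym
  refine le_trans (EReal.coe_le_coe_iff.2 (by linarith : r ≤ g j - g (W.M 0 ω))) ?_
  exact nh_le_limsup' ((hr j).mono fun n hn => le_of_eq (by rw [hs n, hn] : W.S n ω = g j - g (W.M 0 ω)).symm)

private lemma nh_liminf_eq_bot (hs : ∀ n, W.S n ω = g (W.M n ω) - g (W.M 0 ω))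
    (hr : ∀ j, ∃ᶠ n in atTop, W.M n ω = j) (hB : ¬ BddBelow (Set.range g)) :
    Filter.liminf (fun n => (W.S n ω : EReal)) Filter.atTop = ⊥ := by
  apply nh_ereal_eq_bot
  intro r
  obtain ⟨y, hym, hy⟩ := not_bddBelow_iff.1 hB (r + g (W.M 0 ω))
  obtain ⟨j, rfl⟩ := hym
  refine le_trans ?_ (EReal.coe_le_coe_iff.2 (by linarith : g j - g (W.M 0 ω) ≤ r))
  exact nh_liminf_le' ((hr j).mono fun n hn => le_of_eq (by rw [hs n, hn] : W.S n ω = g j - g (W.M 0 ω)))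

private lemma nh_bddAbove_of_abs (h : BddAbove (Set.range fun i => |g i|)) :
    BddAbove (Set.range g) := by
  obtain ⟨C, hC⟩ := h
  refine ⟨C, ?_⟩
  rintro x ⟨i, rfl⟩
  exact (le_abs_self _).trans (hC (Set.mem_range_self i))

private lemma nh_bddBelow_of_abs (h : BddAbove (Set.range fun i => |g i|)) :
    BddBelow (Set.range g) := by
  obtain ⟨C, hC⟩ := h
  refine ⟨-C, ?_⟩
  rintro x ⟨i, rfl⟩
  have := hC (Set.mem_range_self i)
  have h2 := neg_abs_le (g i)
  linarith

end NHAux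

/-- **Classification of null-homologous Markov random walks.**
If `X_n = g(M_n) - g(M_{n-1})` `P_π`-a.s. for all `n ≥ 1`, then exactly one of the five
alternatives (NH-1)–(NH-5) holds; moreover, whenever for `† ∈ {>, <}` all ladder epochs
`σ_n^†` are a.s. finite, the associated ladder chain is transient. -/
theorem null_homologous_classification (W : MRW 𝕊 Ω) (g : 𝕊 → ℝ)
    (hg : ∀ n : ℕ, 1 ≤ n → ∀ᵐ ω ∂W.Pπ, W.X n ω = g (W.M n ω) - g (W.M (n - 1) ω)) :
    (∃! k : Fin 5,
      ![(∀ i, g i = 0) ∧ ∀ n : ℕ, 1 ≤ n → ∀ i, ∀ᵐ ω ∂W.P i, W.S n ω = 0,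
        (∃ i, g i ≠ 0) ∧ BddAbove (Set.range fun i => |g i|) ∧
          ∀ᵐ ω ∂W.Pπ,
            Filter.liminf (fun n => (W.S n ω : EReal)) Filter.atTop ≠ ⊥ ∧
            Filter.limsup (fun n => (W.S n ω : EReal)) Filter.atTop ≠ ⊤,
        ¬BddBelow (Set.range g) ∧ BddAbove (Set.range g) ∧
          ∀ᵐ ω ∂W.Pπ,
            Filter.liminf (fun n => (W.S n ω : EReal)) Filter.atTop = ⊥ ∧
            Filter.limsup (fun n => (W.S n ω : EReal)) Filter.atTop ≠ ⊥ ∧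
            Filter.limsup (fun n => (W.S n ω : EReal)) Filter.atTop ≠ ⊤,
        BddBelow (Set.range g) ∧ ¬BddAbove (Set.range g) ∧
          ∀ᵐ ω ∂W.Pπ,
            Filter.liminf (fun n => (W.S n ω : EReal)) Filter.atTop ≠ ⊥ ∧
            Filter.liminf (fun n => (W.S n ω : EReal)) Filter.atTop ≠ ⊤ ∧
            Filter.limsup (fun n => (W.S n ω : EReal)) Filter.atTop = ⊤,
        ¬BddBelow (Set.range g) ∧ ¬BddAbove (Set.range g) ∧
          ∀ᵐ ω ∂W.Pπ,
            Filter.liminf (fun n => (W.S n ω : EReal)) Filter.atTop = ⊥ ∧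
            Filter.limsup (fun n => (W.S n ω : EReal)) Filter.atTop = ⊤] k) ∧
    ((∀ i, ∀ n : ℕ, 1 ≤ n → ∀ᵐ ω ∂W.P i, W.ladderGt n ω ≠ ⊤) →
      ∀ i, W.P i {ω | ∀ N, ∃ n ≥ N, W.Mgt n ω = i} < 1) ∧
    ((∀ i, ∀ n : ℕ, 1 ≤ n → ∀ᵐ ω ∂W.P i, W.ladderLt n ω ≠ ⊤) →
      ∀ i, W.P i {ω | ∀ N, ∃ n ≥ N, W.Mlt n ω = i} < 1) := by
  classical
  have hSg : ∀ i, ∀ᵐ ω ∂W.P i, ∀ n, W.S n ω = g (W.M n ω) - g (W.M 0 ω) :=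
    nh_hSg W g hg
  have hGood : ∀ᵐ ω ∂W.Pπ, (∀ n, W.S n ω = g (W.M n ω) - g (W.M 0 ω)) ∧
      ∀ j, ∃ᶠ n in atTop, W.M n ω = j :=
    nh_transfer' W (fun i => (hSg i).and (nh_rec W i))
  refine ⟨?_, ?_, ?_⟩
  · -- the five alternatives
    by_cases h0 : ∀ i, g i = 0
    · have hA0 : BddAbove (Set.range g) := ⟨0, by rintro x ⟨i, rfl⟩; simp [h0 i]⟩
      have hB0 : BddBelow (Set.range g) := ⟨0, by rintro x ⟨i, rfl⟩; simp [h0 i]⟩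
      refine ⟨0, ⟨h0, fun n hn i => (hSg i).mono fun ω hs => by
        rw [hs n, h0 (W.M n ω), h0 (W.M 0 ω), sub_zero]⟩, ?_⟩
      intro y hy
      fin_cases y
      · rfl
      · obtain ⟨⟨i, hi⟩, -⟩ := hy; exact absurd (h0 i) hi
      · exact absurd hB0 hy.1
      · exact absurd hA0 hy.2.1
      · exact absurd hB0 hy.1
    by_cases hA : BddAbove (Set.range g) <;> by_cases hB : BddBelow (Set.range g)
    · -- bounded, nonzero : alternative 1
      push_neg at h0
      obtain ⟨C, hC⟩ := hA
      obtain ⟨c, hc⟩ := hB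
      have hub : ∀ j, g j ≤ C := fun j => hC (Set.mem_range_self j)
      have hlb : ∀ j, c ≤ g j := fun j => hc (Set.mem_range_self j)
      refine ⟨1, ⟨h0, ⟨max C (-c), ?_⟩, ?_⟩, ?_⟩
      · rintro x ⟨i, rfl⟩
        refine abs_le.2 ⟨?_, (hub i).trans (le_max_left _ _)⟩
        have := le_max_right C (-c)
        linarith [hlb i]
      · filter_upwards [hGood] with ω hω
        obtain ⟨hs, hr⟩ := hω
        exact ⟨nh_liminf_ne_bot hs hlb, nh_limsup_ne_top hs hub⟩
      · intro y hy
        fin_cases y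
        · obtain ⟨i, hi⟩ := h0; exact absurd (hy.1 i) hi
        · rfl
        · exact absurd ⟨c, hc⟩ hy.1
        · exact absurd ⟨C, hC⟩ hy.2.1
        · exact absurd ⟨c, hc⟩ hy.1
    · -- bounded above, unbounded below : alternative 2
      obtain ⟨C, hC⟩ := hA
      have hub : ∀ j, g j ≤ C := fun j => hC (Set.mem_range_self j)
      refine ⟨2, ⟨hB, ⟨C, hC⟩, ?_⟩, ?_⟩
      · filter_upwards [hGood] with ω hω
        obtain ⟨hs, hr⟩ := hω
        exact ⟨nh_liminf_eq_bot hs hr hB, nh_limsup_ne_bot hs (hr (W.M 0 ω)),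
          nh_limsup_ne_top hs hub⟩
      · intro y hy
        fin_cases y
        · refine absurd (⟨0, ?_⟩ : BddBelow (Set.range g)) hB
          rintro x ⟨i, rfl⟩; simp [hy.1 i]
        · exact absurd (nh_bddBelow_of_abs hy.2.1) hB
        · rfl
        · exact absurd hy.1 hB
        · exact absurd ⟨C, hC⟩ hy.2.1
    · -- bounded below, unbounded above : alternative 3
      obtain ⟨c, hc⟩ := hB
      have hlb : ∀ j, c ≤ g j := fun j => hc (Set.mem_range_self j)
      refine ⟨3, ⟨⟨c, hc⟩, hA, ?_⟩, ?_⟩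
      · filter_upwards [hGood] with ω hω
        obtain ⟨hs, hr⟩ := hω
        exact ⟨nh_liminf_ne_bot hs hlb, nh_liminf_ne_top hs (hr (W.M 0 ω)),
          nh_limsup_eq_top hs hr hA⟩
      · intro y hy
        fin_cases y
        · refine absurd (⟨0, ?_⟩ : BddAbove (Set.range g)) hA
          rintro x ⟨i, rfl⟩; simp [hy.1 i]
        · exact absurd (nh_bddAbove_of_abs hy.2.1) hA
        · exact absurd hy.2.1 hA
        · rfl
        · exact absurd ⟨c, hc⟩ hy.1
    · -- unbounded both ways : alternative 4
      refine ⟨4, ⟨hB, hA, ?_⟩, ?_⟩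
      · filter_upwards [hGood] with ω hω
        obtain ⟨hs, hr⟩ := hω
        exact ⟨nh_liminf_eq_bot hs hr hB, nh_limsup_eq_top hs hr hA⟩
      · intro y hy
        fin_cases y
        · refine absurd (⟨0, ?_⟩ : BddBelow (Set.range g)) hB
          rintro x ⟨i, rfl⟩; simp [hy.1 i]
        · exact absurd (nh_bddBelow_of_abs hy.2.1) hB
        · exact absurd hy.2.1 hA
        · exact absurd hy.1 hB
        · rfl
  · -- ascending ladder chain transient
    intro hfin i
    exact nh_ladder W g hSg W.ladderGt (fun a b => a < b)
      (fun hab hbc => lt_trans hab hbc) (fun a => lt_irrefl a)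
      (fun n ω => rfl) (fun ω => rfl) hfin i
  · -- descending ladder chain transient
    intro hfin i
    exact nh_ladder W g hSg W.ladderLt (fun a b => b < a)
      (fun hab hbc => lt_trans hbc hab) (fun a => lt_irrefl a)
      (fun n ω => rfl) (fun ω => rfl) hfin i
end
end

section
/- Let (M_n, S_n)_{n≥0} be an MRW. The following are equivalent: (a) (M_n, S_n)_{n≥0} is null-homologous; (b) the embedded random walk (S_{τ_n(i)})_{n≥0} has zero increments (i.e. S_{τ_n(i)} = 0 P_i-a.s. for all n) for some i ∈ S; (c) (S_{τ_n(i)})_{n≥0} has zero increments for all i ∈ S. -/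
open MeasureTheory Filter Set ENNReal
open scoped Classical

noncomputable section

variable {𝕊 : Type*} {Ω : Type*} [Countable 𝕊] [MeasurableSpace 𝕊]
  [MeasurableSingletonClass 𝕊] [MeasurableSpace Ω]


namespace MRW

variable (W : MRW 𝕊 Ω)

/-- Independent real random variables whose sum is a.s. constant are a.s. constant. -/
lemma dirac_of_pi_sum {n : ℕ} (μ : Fin (n + 1) → Measure ℝ)
    [∀ k, IsProbabilityMeasure (μ k)] (c : ℝ)
    (h : Measure.pi μ {x | ∑ k, x k = c} = 1) (k0 : Fin (n + 1)) :
    ∃ d : ℝ, μ k0 ({d}ᶜ) = 0 := by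
  set ν : Measure (Fin n → ℝ) := Measure.pi fun j => μ (k0.succAbove j) with hν
  have hmp := measurePreserving_piFinSuccAbove μ k0
  have hmsum : Measurable fun q : ℝ × (Fin n → ℝ) => q.1 + ∑ j, q.2 j := by
    apply measurable_fst.add
    exact Finset.measurable_sum _ fun j _ => (measurable_pi_apply j).comp measurable_snd
  set s : Set (ℝ × (Fin n → ℝ)) := {q | q.1 + ∑ j, q.2 j = c} with hsdef
  have hs : MeasurableSet s := hmsum (measurableSet_singleton c)
  have hpre : (⇑(MeasurableEquiv.piFinSuccAbove (fun _ => ℝ) k0)) ⁻¹' s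
      = {x : Fin (n + 1) → ℝ | ∑ k, x k = c} := by
    ext x
    simp [hsdef, MeasurableEquiv.piFinSuccAbove, Fin.sum_univ_succAbove _ k0, Fin.removeNth]
    exact Iff.rfl
  have h1 : ((μ k0).prod ν) s = 1 := by
    rw [← hmp.measure_preimage hs.nullMeasurableSet, hpre, h]
  have hfmeas : Measurable fun y : ℝ => ν (Prod.mk y ⁻¹' s) :=
    measurable_measure_prodMk_left hs
  have hfle : ∀ y, ν (Prod.mk y ⁻¹' s) ≤ 1 := fun y => prob_le_one
  have hint : ∫⁻ y, ν (Prod.mk y ⁻¹' s) ∂(μ k0) = 1 := by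
    rw [← Measure.prod_apply hs]; exact h1
  have hsub : ∫⁻ y, (1 - ν (Prod.mk y ⁻¹' s)) ∂(μ k0) = 0 := by
    rw [lintegral_sub hfmeas (by rw [hint]; exact one_ne_top)
      (Filter.Eventually.of_forall hfle), hint, lintegral_one, measure_univ]
    simp
  have hae : ∀ᵐ y ∂(μ k0), (1 : ℝ≥0∞) - ν (Prod.mk y ⁻¹' s) = 0 := by
    have := (lintegral_eq_zero_iff (measurable_const.sub hfmeas)).mp hsub
    filter_upwards [this] with y hy
    simpa using hy
  have haeA : ∀ᵐ y ∂(μ k0), ν (Prod.mk y ⁻¹' s) = 1 := by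
    filter_upwards [hae] with y hy
    exact le_antisymm (hfle y) (tsub_eq_zero_iff_le.mp hy)
  set A : Set ℝ := {y | ν (Prod.mk y ⁻¹' s) = 1} with hA
  have hAc : μ k0 Aᶜ = 0 := haeA
  have hAne : A.Nonempty := by
    by_contra hemp
    rw [Set.not_nonempty_iff_eq_empty] at hemp
    have : μ k0 univ = 0 := by
      rw [← Set.compl_empty, ← hemp]; exact hAc
    rw [measure_univ] at this; exact one_ne_zero this
  obtain ⟨d, hd⟩ := hAne
  refine ⟨d, le_antisymm ?_ zero_le⟩
  rw [← hAc]
  apply measure_mono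
  intro y hy hyA
  apply hy
  by_contra hyd
  have hdisj : Disjoint (Prod.mk y ⁻¹' s) (Prod.mk d ⁻¹' s) := by
    rw [Set.disjoint_left]
    intro z hz1 hz2
    simp only [hsdef, Set.mem_preimage, Set.mem_setOf_eq] at hz1 hz2
    exact hyd (by have hyde : y = d := by linarith
                  simp [hyde])
  have hm1 : MeasurableSet (Prod.mk d ⁻¹' s) := measurable_prodMk_left hs
  have hun : ν ((Prod.mk y ⁻¹' s) ∪ (Prod.mk d ⁻¹' s))
      = ν (Prod.mk y ⁻¹' s) + ν (Prod.mk d ⁻¹' s) := measure_union hdisj hm1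
  rw [hyA, hd] at hun
  have hle : ν ((Prod.mk y ⁻¹' s) ∪ (Prod.mk d ⁻¹' s)) ≤ 1 := prob_le_one
  rw [hun] at hle
  norm_num at hle

/-- The cylinder event where the driving chain follows `path` up to time `m`. -/
def mrwCyl (m : ℕ) (path : ℕ → 𝕊) : Set Ω := {ω | ∀ k ≤ m, W.M k ω = path k}

lemma mrwCyl_measurable (m : ℕ) (path : ℕ → 𝕊) : MeasurableSet (W.mrwCyl m path) := by
  have : W.mrwCyl m path = ⋂ (k : ℕ) (_ : k ≤ m), (W.M k) ⁻¹' {path k} := by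
    ext ω; simp [mrwCyl]
  rw [this]
  exact MeasurableSet.iInter fun k => MeasurableSet.iInter fun _ =>
    W.measM k (measurableSet_singleton _)

lemma prob_mrwCyl (i : 𝕊) (m : ℕ) (path : ℕ → 𝕊) :
    W.P i (W.mrwCyl m path) = (if path 0 = i then 1 else 0) *
      ∏ k ∈ Finset.range m, W.p (path k) (path (k + 1)) := by
  have hK : ∀ a b : 𝕊, W.K a b Set.univ = 1 := fun a b => by
    haveI := W.Kprob a b; exact measure_univ
  have := W.pathLaw i m path (fun _ => Set.univ) (fun _ => MeasurableSet.univ)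
  simpa [mrwCyl, hK] using this

/-- The conditional joint law of the increments along a cylinder is the product of the
kernel measures. -/
lemma mrw_map_restrict (i : 𝕊) (m : ℕ) (path : ℕ → 𝕊) (h0 : path 0 = i)
    (hc : ∏ k ∈ Finset.range m, W.p (path k) (path (k + 1)) ≠ 0) :
    ((W.P i).restrict (W.mrwCyl m path)).map (fun ω (k : Fin m) => W.X (k + 1) ω)
      = (∏ k ∈ Finset.range m, W.p (path k) (path (k + 1))) •
        Measure.pi (fun k : Fin m => W.K (path (k : ℕ)) (path ((k : ℕ) + 1))) := by
  haveI := W.isProb i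
  haveI : ∀ k : Fin m, IsProbabilityMeasure (W.K (path (k : ℕ)) (path ((k : ℕ) + 1))) :=
    fun k => W.Kprob _ _
  set c := ∏ k ∈ Finset.range m, W.p (path k) (path (k + 1)) with hcdef
  have hXvec : Measurable fun ω (k : Fin m) => W.X ((k : ℕ) + 1) ω :=
    measurable_pi_lambda _ fun k => W.measX _
  have hcP : W.P i (W.mrwCyl m path) = c := by
    rw [prob_mrwCyl, h0, if_pos rfl, one_mul]
  have hcnetop : c ≠ ⊤ := by
    rw [← hcP]; exact (lt_of_le_of_lt prob_le_one one_lt_top).ne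
  have hbox : ∀ B' : Fin m → Set ℝ, (∀ k, MeasurableSet (B' k)) →
      (((W.P i).restrict (W.mrwCyl m path)).map (fun ω (k : Fin m) => W.X ((k : ℕ) + 1) ω))
        (Set.univ.pi B')
      = c * ∏ k : Fin m, W.K (path (k : ℕ)) (path ((k : ℕ) + 1)) (B' k) := by
    intro B' hB'
    rw [Measure.map_apply hXvec (MeasurableSet.univ_pi hB'),
      Measure.restrict_apply (hXvec (MeasurableSet.univ_pi hB'))]
    set B : ℕ → Set ℝ := fun k => if h : 1 ≤ k ∧ k ≤ m then B' ⟨k - 1, by omega⟩ else Set.univ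
      with hBdef
    have hBmeas : ∀ k, MeasurableSet (B k) := by
      intro k
      by_cases h : 1 ≤ k ∧ k ≤ m
      · rw [hBdef]; simp only [dif_pos h]; exact hB' _
      · rw [hBdef]; simp only [dif_neg h]; exact MeasurableSet.univ
    have hevent : ((fun ω (k : Fin m) => W.X ((k : ℕ) + 1) ω) ⁻¹' (Set.univ.pi B'))
        ∩ W.mrwCyl m path
        = {ω | (∀ k ≤ m, W.M k ω = path k) ∧ ∀ k, 1 ≤ k → k ≤ m → W.X k ω ∈ B k} := by
      ext ω
      simp only [Set.mem_inter_iff, Set.mem_preimage, Set.mem_univ_pi, mrwCyl,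
        Set.mem_setOf_eq]
      constructor
      · rintro ⟨hx, hcyl⟩
        refine ⟨hcyl, fun k hk1 hkm => ?_⟩
        have hlt : k - 1 < m := by omega
        have := hx ⟨k - 1, hlt⟩
        rw [hBdef]
        simp only [dif_pos (And.intro hk1 hkm)]
        have hkk : (k - 1) + 1 = k := by omega
        simpa [hkk] using this
      · rintro ⟨hcyl, hx⟩
        refine ⟨fun k => ?_, hcyl⟩
        have h1 : 1 ≤ (k : ℕ) + 1 := by omega
        have h2 : (k : ℕ) + 1 ≤ m := by omega
        have := hx ((k : ℕ) + 1) h1 h2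
        rw [hBdef] at this
        simp only [dif_pos (And.intro h1 h2)] at this
        have hkk : ((k : ℕ) + 1) - 1 = (k : ℕ) := by omega
        convert this using 2
        exact Fin.ext hkk.symm
      
    rw [hevent, W.pathLaw i m path B hBmeas, h0, if_pos rfl, one_mul]
    have hprod : ∏ k ∈ Finset.range m,
        (W.p (path k) (path (k + 1)) * W.K (path k) (path (k + 1)) (B (k + 1)))
        = ∏ k : Fin m,
          (W.p (path (k : ℕ)) (path ((k : ℕ) + 1)) *
            W.K (path (k : ℕ)) (path ((k : ℕ) + 1)) (B' k)) := by
      rw [← Fin.prod_univ_eq_prod_range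
        (fun k => W.p (path k) (path (k + 1)) * W.K (path k) (path (k + 1)) (B (k + 1))) m]
      apply Finset.prod_congr rfl
      intro k _
      congr 1
      rw [hBdef]
      have h12 : 1 ≤ (k : ℕ) + 1 ∧ (k : ℕ) + 1 ≤ m := ⟨by omega, by omega⟩
      simp only [dif_pos h12]
      congr 1
    rw [hprod, Finset.prod_mul_distrib]
    congr 1
    rw [hcdef, ← Fin.prod_univ_eq_prod_range (fun k => W.p (path k) (path (k + 1))) m]
  have hpi := Measure.pi_eq (μ' := c⁻¹ •
      (((W.P i).restrict (W.mrwCyl m path)).map (fun ω (k : Fin m) => W.X ((k : ℕ) + 1) ω)))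
    (fun s hs => by
      rw [Measure.smul_apply, smul_eq_mul, hbox s hs, ← mul_assoc,
        ENNReal.inv_mul_cancel hc hcnetop, one_mul])
  rw [hpi, smul_smul, ENNReal.mul_inv_cancel hc hcnetop, one_smul]


/-- On a first-return cycle cylinder, the first return time to `i` equals the cycle
length. -/
lemma tau_one_on_cyl (i : 𝕊) (m : ℕ) (path : ℕ → 𝕊) (hm : 1 ≤ m)
    (hlast : path m = i) (hmid : ∀ k, 0 < k → k < m → path k ≠ i) :
    ∀ ω ∈ W.mrwCyl m path, W.τ i 1 ω = m := by
  intro ω hω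
  have h1 : W.τ i 1 ω = sInf {k : ℕ | 0 < k ∧ W.M k ω = i} := by
    show W.τ i (0 + 1) ω = _
    simp [MRW.τ]
  rw [h1]
  have hmem : m ∈ {k : ℕ | 0 < k ∧ W.M k ω = i} := by
    refine ⟨by omega, ?_⟩
    rw [hω m le_rfl, hlast]
  apply le_antisymm (Nat.sInf_le hmem)
  have hj := Nat.sInf_mem (⟨m, hmem⟩ : {k : ℕ | 0 < k ∧ W.M k ω = i}.Nonempty)
  set j := sInf {k : ℕ | 0 < k ∧ W.M k ω = i}
  by_contra hlt
  push_neg at hlt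
  exact hmid j hj.1 hlt (by rw [← hω j (le_of_lt hlt)]; exact hj.2)

/-- Along a positive-probability first-return cycle, the increments a.s. sum to zero. -/
lemma cycle_pi_sum (i : 𝕊) (hb : ∀ᵐ ω ∂W.P i, W.S (W.τ i 1 ω) ω = 0)
    (m : ℕ) (path : ℕ → 𝕊) (hm : 1 ≤ m) (h0 : path 0 = i) (hlast : path m = i)
    (hmid : ∀ k, 0 < k → k < m → path k ≠ i)
    (hc : ∏ k ∈ Finset.range m, W.p (path k) (path (k + 1)) ≠ 0) :
    Measure.pi (fun k : Fin m => W.K (path (k : ℕ)) (path ((k : ℕ) + 1)))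
      {x : Fin m → ℝ | ∑ k, x k = 0} = 1 := by
  haveI := W.isProb i
  haveI : ∀ k : Fin m, IsProbabilityMeasure (W.K (path (k : ℕ)) (path ((k : ℕ) + 1))) :=
    fun k => W.Kprob _ _
  set c := ∏ k ∈ Finset.range m, W.p (path k) (path (k + 1)) with hcdef
  have hcP : W.P i (W.mrwCyl m path) = c := by
    rw [prob_mrwCyl, h0, if_pos rfl, one_mul]
  have hcnetop : c ≠ ⊤ := by
    rw [← hcP]; exact (lt_of_le_of_lt prob_le_one one_lt_top).ne
  have hXvec : Measurable fun ω (k : Fin m) => W.X ((k : ℕ) + 1) ω :=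
    measurable_pi_lambda _ fun k => W.measX _
  have hmeasS : MeasurableSet {x : Fin m → ℝ | ∑ k, x k = 0} :=
    (Finset.measurable_sum _ fun k _ => measurable_pi_apply k) (measurableSet_singleton 0)
  have hmap := W.mrw_map_restrict i m path h0 hc
  have happ : W.P i (((fun ω (k : Fin m) => W.X ((k : ℕ) + 1) ω) ⁻¹'
        {x : Fin m → ℝ | ∑ k, x k = 0}) ∩ W.mrwCyl m path)
      = c * Measure.pi (fun k : Fin m => W.K (path (k : ℕ)) (path ((k : ℕ) + 1)))
          {x : Fin m → ℝ | ∑ k, x k = 0} := by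
    rw [← Measure.restrict_apply (hXvec hmeasS), ← Measure.map_apply hXvec hmeasS, hmap,
      Measure.smul_apply, smul_eq_mul]
  have hpreS : ∀ ω, ((fun (k : Fin m) => W.X ((k : ℕ) + 1) ω) ∈
      {x : Fin m → ℝ | ∑ k, x k = 0}) ↔ W.S m ω = 0 := by
    intro ω
    simp only [Set.mem_setOf_eq, MRW.S]
    rw [Fin.sum_univ_eq_sum_range (fun k => W.X (k + 1) ω) m]
  have hbad : W.P i {ω | ¬ W.S (W.τ i 1 ω) ω = 0} = 0 := by
    rw [← MeasureTheory.ae_iff]; exact hb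
  have hsub : W.mrwCyl m path ⊆
      (((fun ω (k : Fin m) => W.X ((k : ℕ) + 1) ω) ⁻¹'
        {x : Fin m → ℝ | ∑ k, x k = 0}) ∩ W.mrwCyl m path)
      ∪ {ω | ¬ W.S (W.τ i 1 ω) ω = 0} := by
    intro ω hω
    by_cases hS : W.S m ω = 0
    · exact Or.inl ⟨(hpreS ω).mpr hS, hω⟩
    · refine Or.inr ?_
      rw [Set.mem_setOf_eq, W.tau_one_on_cyl i m path hm hlast hmid ω hω]
      exact hS
  have hle : c ≤ c * Measure.pi (fun k : Fin m => W.K (path (k : ℕ)) (path ((k : ℕ) + 1)))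
      {x : Fin m → ℝ | ∑ k, x k = 0} := by
    calc c = W.P i (W.mrwCyl m path) := hcP.symm
    _ ≤ W.P i ((((fun ω (k : Fin m) => W.X ((k : ℕ) + 1) ω) ⁻¹'
          {x : Fin m → ℝ | ∑ k, x k = 0}) ∩ W.mrwCyl m path)
        ∪ {ω | ¬ W.S (W.τ i 1 ω) ω = 0}) := measure_mono hsub
    _ ≤ W.P i ((((fun ω (k : Fin m) => W.X ((k : ℕ) + 1) ω) ⁻¹'
          {x : Fin m → ℝ | ∑ k, x k = 0}) ∩ W.mrwCyl m path))
        + W.P i {ω | ¬ W.S (W.τ i 1 ω) ω = 0} := measure_union_le _ _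
    _ = c * Measure.pi (fun k : Fin m => W.K (path (k : ℕ)) (path ((k : ℕ) + 1)))
          {x : Fin m → ℝ | ∑ k, x k = 0} := by rw [happ, hbad, add_zero]
  have hge : Measure.pi (fun k : Fin m => W.K (path (k : ℕ)) (path ((k : ℕ) + 1)))
      {x : Fin m → ℝ | ∑ k, x k = 0} ≥ 1 := by
    by_contra hgt
    push_neg at hgt
    have : c * Measure.pi (fun k : Fin m => W.K (path (k : ℕ)) (path ((k : ℕ) + 1)))
        {x : Fin m → ℝ | ∑ k, x k = 0} < c * 1 := by
      exact ENNReal.mul_lt_mul_right hc hcnetop hgt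
    rw [mul_one] at this
    exact absurd hle (not_le.mpr this)
  exact le_antisymm prob_le_one hge

/-- The point at which `K a b` is concentrated, when it is a Dirac measure. -/
def cst (a b : 𝕊) : ℝ :=
  if h : ∃ d : ℝ, W.K a b ({d}ᶜ) = 0 then h.choose else 0

lemma cst_spec {a b : 𝕊} (h : ∃ d : ℝ, W.K a b ({d}ᶜ) = 0) :
    W.K a b ({W.cst a b}ᶜ) = 0 := by
  rw [cst, dif_pos h]; exact h.choose_spec

lemma cst_eq {a b : 𝕊} {d : ℝ} (h : W.K a b ({d}ᶜ) = 0) : W.cst a b = d := by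
  haveI := W.Kprob a b
  have h' := W.cst_spec ⟨d, h⟩
  by_contra hne
  have : (1 : ℝ≥0∞) ≤ 0 := by
    calc (1 : ℝ≥0∞) = W.K a b Set.univ := measure_univ.symm
    _ ≤ W.K a b (({W.cst a b}ᶜ) ∪ ({d}ᶜ)) := by
        apply measure_mono
        intro x _
        by_cases hx : x = W.cst a b
        · exact Or.inr (by simp [hx, hne])
        · exact Or.inl hx
    _ ≤ W.K a b ({W.cst a b}ᶜ) + W.K a b ({d}ᶜ) := measure_union_le _ _
    _ = 0 := by rw [h', h, add_zero]
  norm_num at this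

/-- Along a positive-probability first-return cycle, every edge kernel is a Dirac measure
and the Dirac points sum to zero. -/
lemma cycle_dirac_sum (i : 𝕊) (hb : ∀ᵐ ω ∂W.P i, W.S (W.τ i 1 ω) ω = 0)
    (m : ℕ) (path : ℕ → 𝕊) (hm : 1 ≤ m) (h0 : path 0 = i) (hlast : path m = i)
    (hmid : ∀ k, 0 < k → k < m → path k ≠ i)
    (hc : ∏ k ∈ Finset.range m, W.p (path k) (path (k + 1)) ≠ 0) :
    (∀ k < m, W.K (path k) (path (k + 1)) ({W.cst (path k) (path (k + 1))}ᶜ) = 0) ∧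
      ∑ k ∈ Finset.range m, W.cst (path k) (path (k + 1)) = 0 := by
  haveI : ∀ k : Fin m, IsProbabilityMeasure (W.K (path (k : ℕ)) (path ((k : ℕ) + 1))) :=
    fun k => W.Kprob _ _
  have hpisum := W.cycle_pi_sum i hb m path hm h0 hlast hmid hc
  obtain ⟨n, rfl⟩ : ∃ n, m = n + 1 := ⟨m - 1, by omega⟩
  have hdirac : ∀ k : Fin (n + 1),
      ∃ d : ℝ, W.K (path (k : ℕ)) (path ((k : ℕ) + 1)) ({d}ᶜ) = 0 :=
    fun k => dirac_of_pi_sum _ 0 hpisum k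
  have hdirac' : ∀ k < n + 1, W.K (path k) (path (k + 1))
      ({W.cst (path k) (path (k + 1))}ᶜ) = 0 := fun k hk =>
    W.cst_spec (by simpa using hdirac ⟨k, hk⟩)
  refine ⟨hdirac', ?_⟩
  set d : Fin (n + 1) → ℝ := fun k => W.cst (path (k : ℕ)) (path ((k : ℕ) + 1)) with hd
  have hone : ∀ k : Fin (n + 1),
      W.K (path (k : ℕ)) (path ((k : ℕ) + 1)) {d k} = 1 := by
    intro k
    haveI := W.Kprob (path (k : ℕ)) (path ((k : ℕ) + 1))
    have := hdirac' (k : ℕ) k.isLt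
    have hcompl := measure_add_measure_compl
      (μ := W.K (path (k : ℕ)) (path ((k : ℕ) + 1)))
      (measurableSet_singleton (d k))
    rw [this] at hcompl
    simpa using hcompl
  have hpibox : Measure.pi (fun k : Fin (n + 1) => W.K (path (k : ℕ)) (path ((k : ℕ) + 1)))
      (Set.univ.pi fun k => {d k}) = 1 := by
    rw [Measure.pi_pi]
    simp [hone]
  haveI : IsProbabilityMeasure
      (Measure.pi (fun k : Fin (n + 1) => W.K (path (k : ℕ)) (path ((k : ℕ) + 1)))) := by
    constructor
    have := Measure.pi_pi (fun k : Fin (n + 1) => W.K (path (k : ℕ)) (path ((k : ℕ) + 1)))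
      (fun _ => Set.univ)
    simpa [measure_univ] using this
  -- the two full-measure sets intersect
  have hnonempty : ({x : Fin (n + 1) → ℝ | ∑ k, x k = 0} ∩
      Set.univ.pi fun k => {d k}).Nonempty := by
    by_contra hemp
    rw [Set.not_nonempty_iff_eq_empty] at hemp
    have hcov : (Set.univ : Set (Fin (n + 1) → ℝ)) ⊆
        {x : Fin (n + 1) → ℝ | ∑ k, x k = 0}ᶜ ∪ (Set.univ.pi fun k => {d k})ᶜ := by
      intro x _
      by_cases h1 : x ∈ {x : Fin (n + 1) → ℝ | ∑ k, x k = 0}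
      · by_cases h2 : x ∈ Set.univ.pi fun k => {d k}
        · exact absurd (Set.mem_inter h1 h2) (by rw [hemp]; exact Set.notMem_empty x)
        · exact Or.inr h2
      · exact Or.inl h1
    have h1 : Measure.pi (fun k : Fin (n + 1) => W.K (path (k : ℕ)) (path ((k : ℕ) + 1)))
        ({x : Fin (n + 1) → ℝ | ∑ k, x k = 0}ᶜ) = 0 := by
      have hms : MeasurableSet {x : Fin (n + 1) → ℝ | ∑ k, x k = 0} :=
        (Finset.measurable_sum _ fun k _ => measurable_pi_apply k)
          (measurableSet_singleton 0)
      rw [measure_compl hms (measure_ne_top _ _), hpisum, measure_univ]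
      simp
    have h2 : Measure.pi (fun k : Fin (n + 1) => W.K (path (k : ℕ)) (path ((k : ℕ) + 1)))
        ((Set.univ.pi fun k => {d k})ᶜ) = 0 := by
      rw [measure_compl (MeasurableSet.univ_pi fun k => measurableSet_singleton _)
        (measure_ne_top _ _), hpibox, measure_univ]
      simp
    have hm' := (measure_mono (μ := Measure.pi
        (fun k : Fin (n + 1) => W.K (path (k : ℕ)) (path ((k : ℕ) + 1)))) hcov).trans
      (measure_union_le _ _)
    rw [h1, h2, add_zero, measure_univ] at hm'
    exact absurd hm' (by norm_num)
  obtain ⟨x, hx1, hx2⟩ := hnonempty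
  have hxd : ∀ k : Fin (n + 1), x k = d k := by
    intro k
    have := hx2 k (Set.mem_univ k)
    simpa using this
  have : ∑ k : Fin (n + 1), d k = 0 := by
    rw [← Finset.sum_congr rfl fun k _ => hxd k]
    exact hx1
  rw [← Fin.sum_univ_eq_sum_range (fun k => W.cst (path k) (path (k + 1))) (n + 1)]
  exact this


/-- From `i`, any state `j` is reachable through a path of positive transition
probabilities. -/
lemma reach (i j : 𝕊) : ∃ (n : ℕ) (path : ℕ → 𝕊), path 0 = i ∧ path n = j ∧
    ∀ k < n, W.p (path k) (path (k + 1)) ≠ 0 := by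
  haveI := W.isProb i
  have hex : ∃ n, W.P i {ω | W.M n ω = j} ≠ 0 := by
    by_contra h
    push_neg at h
    have hcup : W.P i {ω | ∀ N, ∃ n ≥ N, W.M n ω = j}
        ≤ W.P i (⋃ n, {ω | W.M n ω = j}) := by
      apply measure_mono
      intro ω hω
      obtain ⟨n, _, hn⟩ := hω 0
      exact Set.mem_iUnion.mpr ⟨n, hn⟩
    rw [W.recurrent i j, measure_iUnion_null h] at hcup
    norm_num at hcup
  obtain ⟨n, hn⟩ := hex
  set pathOf : (Fin (n + 1) → 𝕊) → ℕ → 𝕊 :=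
    fun v k => if h : k ≤ n then v ⟨k, by omega⟩ else v ⟨n, n.lt_succ_self⟩ with hpathOf
  have hcover : {ω | W.M n ω = j} ⊆
      ⋃ v : Fin (n + 1) → 𝕊, ({ω | W.M n ω = j} ∩ W.mrwCyl n (pathOf v)) := by
    intro ω hω
    refine Set.mem_iUnion.mpr ⟨fun k => W.M k ω, hω, fun k hk => ?_⟩
    simp [hpathOf, dif_pos hk]
  have hexv : ∃ v : Fin (n + 1) → 𝕊,
      W.P i ({ω | W.M n ω = j} ∩ W.mrwCyl n (pathOf v)) ≠ 0 := by
    by_contra h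
    push_neg at h
    refine hn (le_antisymm ?_ zero_le)
    refine le_trans (measure_mono hcover) (le_trans (measure_iUnion_le _) ?_)
    simp only [h, tsum_zero, le_refl]
  obtain ⟨v, hv⟩ := hexv
  have hne : ({ω | W.M n ω = j} ∩ W.mrwCyl n (pathOf v)).Nonempty :=
    nonempty_of_measure_ne_zero hv
  obtain ⟨ω, hωj, hωc⟩ := hne
  have hPcyl : W.P i (W.mrwCyl n (pathOf v)) ≠ 0 :=
    fun h => hv (measure_mono_null Set.inter_subset_right h)
  rw [prob_mrwCyl] at hPcyl
  obtain ⟨h1, h2⟩ := mul_ne_zero_iff.mp hPcyl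
  have h0 : pathOf v 0 = i := by
    by_contra hne0
    rw [if_neg hne0] at h1
    exact h1 rfl
  refine ⟨n, pathOf v, h0, ?_, fun k hk => Finset.prod_ne_zero_iff.mp h2 k
    (Finset.mem_range.mpr hk)⟩
  rw [← hωc n le_rfl]
  exact hωj

/-- Trimmed path out of `i`: avoids `i` after the start. -/
lemma reach_out (i a : 𝕊) : ∃ (n : ℕ) (path : ℕ → 𝕊), path 0 = i ∧ path n = a ∧
    (∀ k < n, W.p (path k) (path (k + 1)) ≠ 0) ∧ ∀ k, 0 < k → k ≤ n → path k ≠ i := by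
  obtain ⟨n, path, h0, hn, he⟩ := W.reach i a
  set s := Nat.findGreatest (fun k => path k = i) n with hs
  have hsi : path s = i := by
    have := Nat.findGreatest_spec (P := fun k => path k = i) (Nat.zero_le n) h0
    simpa [hs] using this
  have hsn : s ≤ n := Nat.findGreatest_le n
  refine ⟨n - s, fun k => path (s + k), hsi, ?_, fun k hk => he (s + k) (by omega), ?_⟩
  · show path (s + (n - s)) = a
    rw [show s + (n - s) = n by omega]
    exact hn
  · intro k hk0 hkn hcontra
    exact Nat.findGreatest_is_greatest (show s < s + k by omega) (by omega) hcontra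

/-- Trimmed path into `i`: avoids `i` before the end. -/
lemma reach_in (a i : 𝕊) : ∃ (n : ℕ) (path : ℕ → 𝕊), path 0 = a ∧ path n = i ∧
    (∀ k < n, W.p (path k) (path (k + 1)) ≠ 0) ∧ ∀ k < n, path k ≠ i := by
  obtain ⟨n, path, h0, hn, he⟩ := W.reach a i
  have hQ : ∃ k, path k = i := ⟨n, hn⟩
  have hsn : Nat.find hQ ≤ n := Nat.find_min' hQ hn
  exact ⟨Nat.find hQ, path, h0, Nat.find_spec hQ,
    fun k hk => he k (by omega), fun k hk => Nat.find_min hQ hk⟩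

/-- If the first embedded cycle increment vanishes a.s., the MRW admits a potential `g`
with all increment kernels concentrated on the corresponding differences of `g`. -/
lemma exists_potential (i : 𝕊) (hb : ∀ᵐ ω ∂W.P i, W.S (W.τ i 1 ω) ω = 0) :
    ∃ g : 𝕊 → ℝ, ∀ a b, W.p a b ≠ 0 → W.K a b ({g b - g a}ᶜ) = 0 := by
  choose lu u hu0 hua hue hui using fun a => W.reach_out i a
  choose lv v hv0 hvi hve hvint using fun b => W.reach_in b i
  set g : 𝕊 → ℝ := fun a => ∑ k ∈ Finset.range (lu a), W.cst (u a k) (u a (k + 1)) with hg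
  set Sv : 𝕊 → ℝ := fun b => ∑ k ∈ Finset.range (lv b), W.cst (v b k) (v b (k + 1)) with hSv
  have hlu0 : ∀ b, lu b = 0 → b = i := by
    intro b h
    rw [← hua b, h, hu0 b]
  have hlv0 : ∀ b, lv b = 0 → b = i := by
    intro b h
    rw [← hvi b, h, hv0 b]
  have hlui : ∀ b, b = i → lu b = 0 := by
    intro b hbi
    by_contra h
    exact hui b (lu b) (Nat.pos_of_ne_zero h) le_rfl (by rw [hua b, hbi])
  have hlvi : ∀ b, b = i → lv b = 0 := by
    intro b hbi
    by_contra h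
    exact hvint b 0 (Nat.pos_of_ne_zero h) (by rw [hv0 b, hbi])
  have h2 : ∀ b, g b + Sv b = 0 := by
    intro b
    by_cases hbi : b = i
    · rw [hg, hSv]
      simp [hlui b hbi, hlvi b hbi]
    · have hlub : 0 < lu b := by
        rcases Nat.eq_zero_or_pos (lu b) with h | h
        · exact absurd (hlu0 b h) hbi
        · exact h
      have hlvb : 0 < lv b := by
        rcases Nat.eq_zero_or_pos (lv b) with h | h
        · exact absurd (hlv0 b h) hbi
        · exact h
      set w : ℕ → 𝕊 := fun k => if k ≤ lu b then u b k else v b (k - lu b) with hw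
      have hw0 : w 0 = i := by simp [hw, hu0]
      have hwm : w (lu b + lv b) = i := by
        have hnle : ¬ (lu b + lv b ≤ lu b) := by omega
        simp only [hw, if_neg hnle]
        rw [show lu b + lv b - lu b = lv b by omega]
        exact hvi b
      have hmid : ∀ k, 0 < k → k < lu b + lv b → w k ≠ i := by
        intro k hk0 hkm
        by_cases hkl : k ≤ lu b
        · simp only [hw, if_pos hkl]; exact hui b k hk0 hkl
        · simp only [hw, if_neg hkl]; exact hvint b (k - lu b) (by omega)
      have hedge : ∀ k < lu b + lv b, W.p (w k) (w (k + 1)) ≠ 0 := by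
        intro k hk
        by_cases hk1 : k + 1 ≤ lu b
        · simp only [hw, if_pos hk1, if_pos (show k ≤ lu b by omega)]
          exact hue b k (by omega)
        · by_cases hk2 : k ≤ lu b
          · have hkeq : k = lu b := by omega
            simp only [hw, if_pos hk2, if_neg hk1]
            rw [show k + 1 - lu b = 1 by omega, hkeq, hua]
            have := hve b 0 hlvb
            rwa [hv0] at this
          · simp only [hw, if_neg hk1, if_neg hk2]
            rw [show k + 1 - lu b = (k - lu b) + 1 by omega]
            exact hve b (k - lu b) (by omega)
      have hprodne : ∏ k ∈ Finset.range (lu b + lv b), W.p (w k) (w (k + 1)) ≠ 0 :=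
        Finset.prod_ne_zero_iff.mpr fun k hk => hedge k (Finset.mem_range.mp hk)
      obtain ⟨_, hsum⟩ := W.cycle_dirac_sum i hb (lu b + lv b) w (by omega) hw0 hwm hmid
        hprodne
      rw [Finset.sum_range_add] at hsum
      have hpart1 : ∑ k ∈ Finset.range (lu b), W.cst (w k) (w (k + 1)) = g b := by
        apply Finset.sum_congr rfl
        intro k hk
        rw [Finset.mem_range] at hk
        simp only [hw, if_pos (show k ≤ lu b by omega), if_pos (show k + 1 ≤ lu b by omega)]
      have hpart2 : ∑ k ∈ Finset.range (lv b), W.cst (w (lu b + k)) (w (lu b + k + 1))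
          = Sv b := by
        apply Finset.sum_congr rfl
        intro k hk
        rw [Finset.mem_range] at hk
        have e1 : w (lu b + k) = v b k := by
          by_cases h0 : k = 0
          · subst h0
            simp only [hw, add_zero, if_pos le_rfl]
            rw [hua, hv0]
          · have hnle : ¬ (lu b + k ≤ lu b) := by omega
            simp only [hw, if_neg hnle]
            rw [show lu b + k - lu b = k by omega]
        have e2 : w (lu b + k + 1) = v b (k + 1) := by
          have hnle : ¬ (lu b + k + 1 ≤ lu b) := by omega
          simp only [hw, if_neg hnle]
          rw [show lu b + k + 1 - lu b = k + 1 by omega]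
        rw [e1, e2]
      rw [hpart1, hpart2] at hsum
      exact hsum
  have h1 : ∀ a b, W.p a b ≠ 0 →
      W.K a b ({W.cst a b}ᶜ) = 0 ∧ g a + W.cst a b + Sv b = 0 := by
    intro a b hpab
    set w : ℕ → 𝕊 := fun k => if k ≤ lu a then u a k else v b (k - (lu a + 1)) with hw
    have hw0 : w 0 = i := by simp [hw, hu0]
    have hwm : w (lu a + 1 + lv b) = i := by
      have hnle : ¬ (lu a + 1 + lv b ≤ lu a) := by omega
      simp only [hw, if_neg hnle]
      rw [show lu a + 1 + lv b - (lu a + 1) = lv b by omega]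
      exact hvi b
    have hmid : ∀ k, 0 < k → k < lu a + 1 + lv b → w k ≠ i := by
      intro k hk0 hkm
      by_cases hkl : k ≤ lu a
      · simp only [hw, if_pos hkl]; exact hui a k hk0 hkl
      · simp only [hw, if_neg hkl]; exact hvint b (k - (lu a + 1)) (by omega)
    have hwlu : w (lu a) = a := by
      simp only [hw, if_pos le_rfl]; exact hua a
    have hwlu1 : w (lu a + 1) = b := by
      simp only [hw, if_neg (show ¬ (lu a + 1 ≤ lu a) by omega)]
      rw [show lu a + 1 - (lu a + 1) = 0 by omega]
      exact hv0 b
    have hedge : ∀ k < lu a + 1 + lv b, W.p (w k) (w (k + 1)) ≠ 0 := by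
      intro k hk
      by_cases hk1 : k + 1 ≤ lu a
      · simp only [hw, if_pos hk1, if_pos (show k ≤ lu a by omega)]
        exact hue a k (by omega)
      · by_cases hk2 : k ≤ lu a
        · have hkeq : k = lu a := by omega
          rw [show k = lu a from hkeq]
          rw [hwlu, hwlu1]
          exact hpab
        · simp only [hw, if_neg hk1, if_neg hk2]
          rw [show k + 1 - (lu a + 1) = (k - (lu a + 1)) + 1 by omega]
          exact hve b (k - (lu a + 1)) (by omega)
    have hprodne : ∏ k ∈ Finset.range (lu a + 1 + lv b), W.p (w k) (w (k + 1)) ≠ 0 :=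
      Finset.prod_ne_zero_iff.mpr fun k hk => hedge k (Finset.mem_range.mp hk)
    obtain ⟨hdir, hsum⟩ := W.cycle_dirac_sum i hb (lu a + 1 + lv b) w (by omega) hw0 hwm
      hmid hprodne
    have hKdir : W.K a b ({W.cst a b}ᶜ) = 0 := by
      have := hdir (lu a) (by omega)
      rwa [hwlu, hwlu1] at this
    refine ⟨hKdir, ?_⟩
    rw [Finset.sum_range_add, Finset.sum_range_succ] at hsum
    have hpart1 : ∑ k ∈ Finset.range (lu a), W.cst (w k) (w (k + 1)) = g a := by
      apply Finset.sum_congr rfl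
      intro k hk
      rw [Finset.mem_range] at hk
      simp only [hw, if_pos (show k ≤ lu a by omega), if_pos (show k + 1 ≤ lu a by omega)]
    have hmidterm : W.cst (w (lu a)) (w (lu a + 1)) = W.cst a b := by rw [hwlu, hwlu1]
    have hpart2 : ∑ k ∈ Finset.range (lv b),
        W.cst (w (lu a + 1 + k)) (w (lu a + 1 + k + 1)) = Sv b := by
      apply Finset.sum_congr rfl
      intro k hk
      rw [Finset.mem_range] at hk
      have e1 : w (lu a + 1 + k) = v b k := by
        have hnle : ¬ (lu a + 1 + k ≤ lu a) := by omega
        simp only [hw, if_neg hnle]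
        rw [show lu a + 1 + k - (lu a + 1) = k by omega]
      have e2 : w (lu a + 1 + k + 1) = v b (k + 1) := by
        have hnle : ¬ (lu a + 1 + k + 1 ≤ lu a) := by omega
        simp only [hw, if_neg hnle]
        rw [show lu a + 1 + k + 1 - (lu a + 1) = k + 1 by omega]
      rw [e1, e2]
    rw [hpart1, hmidterm, hpart2] at hsum
    exact hsum
  refine ⟨g, fun a b hpab => ?_⟩
  obtain ⟨hKdir, hsum1⟩ := h1 a b hpab
  have hsum2 := h2 b
  have hgd : g b - g a = W.cst a b := by linarith
  rw [hgd]
  exact hKdir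


/-- (b) implies (a): zero embedded increments at one state give null-homology. -/
lemma nullHomologous_of_embedded (i : 𝕊) (hb : ∀ᵐ ω ∂W.P i, W.S (W.τ i 1 ω) ω = 0) :
    W.NullHomologous := by
  obtain ⟨g, hgpot⟩ := W.exists_potential i hb
  refine ⟨g, fun n hn => ?_⟩
  set bad : Set Ω := {ω | ¬ W.X n ω = g (W.M n ω) - g (W.M (n - 1) ω)} with hbad
  have hgM : ∀ m : ℕ, Measurable fun ω => g (W.M m ω) :=
    fun m => (measurable_of_countable g).comp (W.measM m)
  have hbadmeas : MeasurableSet bad := by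
    have hmeas : Measurable fun ω => W.X n ω - (g (W.M n ω) - g (W.M (n - 1) ω)) :=
      (W.measX n).sub ((hgM n).sub (hgM (n - 1)))
    have : bad = (fun ω => W.X n ω - (g (W.M n ω) - g (W.M (n - 1) ω))) ⁻¹' ({0}ᶜ) := by
      ext ω; simp [hbad, sub_eq_zero]
    rw [this]
    exact hmeas (measurableSet_singleton 0).compl
  have hPj : ∀ j, W.P j bad = 0 := by
    intro j
    set pathOf : (Fin (n + 1) → 𝕊) → ℕ → 𝕊 :=
      fun v k => if h : k ≤ n then v ⟨k, by omega⟩ else v ⟨n, n.lt_succ_self⟩ with hpathOf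
    have hcover : bad ⊆ ⋃ v : Fin (n + 1) → 𝕊, (W.mrwCyl n (pathOf v) ∩ bad) :=
      fun ω hω => Set.mem_iUnion.mpr ⟨fun k => W.M k ω,
        fun k hk => by simp [hpathOf, dif_pos hk], hω⟩
    have hzero : ∀ v : Fin (n + 1) → 𝕊, W.P j (W.mrwCyl n (pathOf v) ∩ bad) = 0 := by
      intro v
      set q : ℕ → 𝕊 := pathOf v with hq
      set B : ℕ → Set ℝ := fun k =>
        if k = n then ({g (q n) - g (q (n - 1))}ᶜ) else Set.univ with hB
      have hBmeas : ∀ k, MeasurableSet (B k) := by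
        intro k
        by_cases h : k = n
        · rw [hB]; simp only [if_pos h]; exact (measurableSet_singleton _).compl
        · rw [hB]; simp only [if_neg h]; exact MeasurableSet.univ
      have hevent : W.mrwCyl n q ∩ bad =
          {ω | (∀ k ≤ n, W.M k ω = q k) ∧ ∀ k, 1 ≤ k → k ≤ n → W.X k ω ∈ B k} := by
        ext ω
        simp only [Set.mem_inter_iff, mrwCyl, Set.mem_setOf_eq, hbad]
        constructor
        · rintro ⟨hcyl, hx⟩
          refine ⟨hcyl, fun k hk1 hkn => ?_⟩
          by_cases hkeq : k = n
          · subst hkeq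
            rw [hB]
            simp only [if_pos rfl, Set.mem_compl_iff, Set.mem_singleton_iff]
            intro hmem
            rw [Set.mem_singleton_iff] at hmem
            apply hx
            rw [hcyl k le_rfl, hcyl (k - 1) (by omega)]
            exact hmem
          · rw [hB]; simp [if_neg hkeq]
        · rintro ⟨hcyl, hx⟩
          refine ⟨hcyl, fun hcontra => ?_⟩
          have hxn := hx n (by omega) le_rfl
          rw [hB] at hxn
          simp only [if_pos rfl, Set.mem_compl_iff, Set.mem_singleton_iff] at hxn
          apply hxn
          rw [← hcyl n le_rfl, ← hcyl (n - 1) (by omega)]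
          exact hcontra
      rw [hevent, W.pathLaw j n q B hBmeas]
      apply mul_eq_zero_of_right
      apply Finset.prod_eq_zero (Finset.mem_range.mpr (show n - 1 < n by omega))
      rw [show n - 1 + 1 = n by omega]
      by_cases hp : W.p (q (n - 1)) (q n) = 0
      · rw [hp, zero_mul]
      · rw [hB]
        simp only [eq_self_iff_true, if_true]
        rw [hgpot (q (n - 1)) (q n) hp, mul_zero]
    refine le_antisymm ?_ zero_le
    refine le_trans (measure_mono hcover) (le_trans (measure_iUnion_le _) ?_)
    simp only [hzero, tsum_zero, le_refl]
  have hsetbad : {a : Ω | ¬ W.X n a = g (W.M n a) - g (W.M (n - 1) a)} = bad := rfl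
  rw [ae_iff, hsetbad, MRW.Pπ, Measure.sum_apply _ hbadmeas]
  simp [Measure.smul_apply, hPj]

/-- (a) implies (c): a null-homologous MRW has zero embedded increments everywhere. -/
lemma embedded_zero_of_nullHomologous (hnh : W.NullHomologous) :
    ∀ i (n : ℕ), ∀ᵐ ω ∂W.P i, W.S (W.τ i n ω) ω = 0 := by
  obtain ⟨g, hg⟩ := hnh
  intro i
  haveI := W.isProb i
  have hπne : W.π i ≠ 0 := (W.πpos i).ne'
  have hnull : ∀ s : Set Ω, MeasurableSet s → W.Pπ s = 0 → W.P i s = 0 := by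
    intro s hs h0
    rw [MRW.Pπ, Measure.sum_apply _ hs] at h0
    have := ENNReal.tsum_eq_zero.mp h0 i
    rw [Measure.smul_apply, smul_eq_mul] at this
    rcases mul_eq_zero.mp this with h | h
    · exact absurd h hπne
    · exact h
  have hgM : ∀ m : ℕ, Measurable fun ω => g (W.M m ω) :=
    fun m => (measurable_of_countable g).comp (W.measM m)
  have hXae : ∀ᵐ ω ∂W.P i, ∀ n, 1 ≤ n → W.X n ω = g (W.M n ω) - g (W.M (n - 1) ω) := by
    rw [MeasureTheory.ae_all_iff]
    intro n
    by_cases hn : 1 ≤ n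
    · have hmeas : MeasurableSet {ω : Ω | ¬ W.X n ω = g (W.M n ω) - g (W.M (n - 1) ω)} := by
        have hm : Measurable fun ω => W.X n ω - (g (W.M n ω) - g (W.M (n - 1) ω)) :=
          (W.measX n).sub ((hgM n).sub (hgM (n - 1)))
        have : {ω : Ω | ¬ W.X n ω = g (W.M n ω) - g (W.M (n - 1) ω)} =
            (fun ω => W.X n ω - (g (W.M n ω) - g (W.M (n - 1) ω))) ⁻¹' ({0}ᶜ) := by
          ext ω; simp [sub_eq_zero]
        rw [this]
        exact hm (measurableSet_singleton 0).compl
      have hPi : W.P i {ω : Ω | ¬ W.X n ω = g (W.M n ω) - g (W.M (n - 1) ω)} = 0 :=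
        hnull _ hmeas (by rw [← MeasureTheory.ae_iff]; exact hg n hn)
      have hP : ∀ᵐ ω ∂W.P i, W.X n ω = g (W.M n ω) - g (W.M (n - 1) ω) :=
        MeasureTheory.ae_iff.mpr hPi
      exact hP.mono fun ω h _ => h
    · exact Filter.Eventually.of_forall fun ω h => absurd h hn
  have hM0 : ∀ᵐ ω ∂W.P i, W.M 0 ω = i := by
    have hev := W.pathLaw i 0 (fun _ => i) (fun _ => Set.univ) (fun _ => MeasurableSet.univ)
    have hset : {ω | (∀ k ≤ 0, W.M k ω = i) ∧ ∀ k, 1 ≤ k → k ≤ 0 → W.X k ω ∈ Set.univ}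
        = {ω | W.M 0 ω = i} := by
      ext ω
      constructor
      · rintro ⟨h1, _⟩; exact h1 0 le_rfl
      · intro h
        exact ⟨fun k hk => by rw [Nat.le_zero.mp hk]; exact h, fun k _ _ => Set.mem_univ _⟩
    rw [hset] at hev
    simp only [if_pos rfl, Finset.range_zero, Finset.prod_empty, mul_one] at hev
    have hms : MeasurableSet {ω | W.M 0 ω = i} := W.measM 0 (measurableSet_singleton i)
    rw [ae_iff]
    have heq : {a : Ω | ¬ W.M 0 a = i} = {ω | W.M 0 ω = i}ᶜ := rfl
    rw [heq, measure_compl hms (measure_ne_top _ _), measure_univ, hev]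
    simp
  have hrec : ∀ᵐ ω ∂W.P i, ∀ N, ∃ n ≥ N, W.M n ω = i := by
    have hms : MeasurableSet {ω | ∀ N, ∃ n ≥ N, W.M n ω = i} := by
      have : {ω | ∀ N, ∃ n ≥ N, W.M n ω = i}
          = ⋂ N, ⋃ n, ⋃ (_ : n ≥ N), {ω | W.M n ω = i} := by
        ext ω; simp
      rw [this]
      exact MeasurableSet.iInter fun N => MeasurableSet.iUnion fun n =>
        MeasurableSet.iUnion fun _ => W.measM n (measurableSet_singleton i)
    rw [ae_iff]
    have heq : {a : Ω | ¬ ∀ N, ∃ n ≥ N, W.M n a = i} = {ω | ∀ N, ∃ n ≥ N, W.M n ω = i}ᶜ := rfl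
    rw [heq, measure_compl hms (measure_ne_top _ _), measure_univ, W.recurrent i i]
    simp
  intro n
  filter_upwards [hXae, hM0, hrec] with ω hX hM0ω hrecω
  have hS : ∀ m : ℕ, W.S m ω = g (W.M m ω) - g (W.M 0 ω) := by
    intro m
    induction m with
    | zero => simp [MRW.S]
    | succ m ih =>
      have hstep : W.S (m + 1) ω = W.S m ω + W.X (m + 1) ω := by
        rw [MRW.S, MRW.S, Finset.sum_range_succ]
      rw [hstep, ih, hX (m + 1) (by omega)]
      simp only [Nat.add_sub_cancel]
      ring
  have hMτ : ∀ m : ℕ, 1 ≤ m → W.M (W.τ i m ω) ω = i := by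
    intro m hm
    obtain ⟨m', rfl⟩ : ∃ m', m = m' + 1 := ⟨m - 1, by omega⟩
    have hne : {k : ℕ | W.τ i m' ω < k ∧ W.M k ω = i}.Nonempty := by
      obtain ⟨n', hn'1, hn'2⟩ := hrecω (W.τ i m' ω + 1)
      exact ⟨n', by omega, hn'2⟩
    have hτ : W.τ i (m' + 1) ω = sInf {k : ℕ | W.τ i m' ω < k ∧ W.M k ω = i} := by
      simp [MRW.τ]
    rw [hτ]
    exact (Nat.sInf_mem hne).2
  cases n with
  | zero => simp [MRW.τ, MRW.S]
  | succ n =>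
    rw [hS, hMτ (n + 1) (by omega), hM0ω]
    ring

end MRW

/-- An MRW is null-homologous iff the random walk embedded at some (equivalently, every)
state `i` has zero increments, i.e. `S_{τ_n(i)} = 0` `P_i`-a.s. for all `n`. -/
theorem null_homologous_iff_embedded_zero (W : MRW 𝕊 Ω) :
    [W.NullHomologous,
      ∃ i, ∀ n : ℕ, ∀ᵐ ω ∂W.P i, W.S (W.τ i n ω) ω = 0,
      ∀ i, ∀ n : ℕ, ∀ᵐ ω ∂W.P i, W.S (W.τ i n ω) ω = 0].TFAE := by
  tfae_have 1 → 3 := fun h => W.embedded_zero_of_nullHomologous h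
  tfae_have 3 → 2 := by
    intro h
    have hne : Nonempty 𝕊 := by
      by_contra hemp
      rw [not_nonempty_iff] at hemp
      have hsum := W.πsum
      rw [tsum_eq_sum (s := (∅ : Finset 𝕊)) (fun b _ => isEmptyElim b)] at hsum
      simp at hsum
    exact ⟨hne.some, h hne.some⟩
  tfae_have 2 → 1 := by
    rintro ⟨i, h⟩
    exact W.nullHomologous_of_embedded i (h 1)
  tfae_finish
end
end
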